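/- arXiv:math/0105065 — 8 statements merged into one kernel-verified Lean document; each statement's English description precedes it below -/
import Mathlib

section
/- Let A be a finite linearly ordered alphabet, and let α ∈ S_k and β ∈ S_l. Then in the free associative algebra ℚ⟨A⟩ one has F_α(A) · F_β(A) = Σ_{σ ∈ α ⧢ β[k]} F_σ(A). In particular, the ℚ-linear span of the free quasi-ribbons is closed under multiplication. -/
open scoped Classical

noncomputable section

/-- `IsStd w σ` says that `σ` is the standardization of the word `w` (viewed as a
function `Fin n → A`): for positions `i < j`, `σ i < σ j` iff `w i ≤ w j`. -/
def IsStd {A : Type*} [LinearOrder A] {n : ℕ} (w : Fin n → A) (σ : Equiv.Perm (Fin n)) : Prop :=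
  ∀ i j : Fin n, i < j → (σ i < σ j ↔ w i ≤ w j)

theorem exists_isStd {A : Type*} [LinearOrder A] {n : ℕ} (w : Fin n → A) :
    ∃ σ : Equiv.Perm (Fin n), IsStd w σ := by
  refine ⟨(Tuple.sort w)⁻¹, ?_⟩
  have hmono : Monotone (w ∘ (Tuple.sort w)) := Tuple.monotone_sort w
  have hstab : ∀ i j, i < j → w (Tuple.sort w i) = w (Tuple.sort w j) →
      Tuple.sort w i < Tuple.sort w j :=
    (Tuple.eq_sort_iff.1 rfl).2
  intro i j hij
  constructor
  · intro h
    have := hmono h.le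
    simpa using this
  · intro hw
    rcases lt_trichotomy ((Tuple.sort w)⁻¹ i) ((Tuple.sort w)⁻¹ j) with h | h | h
    · exact h
    · exact absurd (congrArg (Tuple.sort w) h) (by simp [hij.ne])
    · exfalso
      have h1 : w j ≤ w i := by simpa using hmono h.le
      have h2 : w j = w i := le_antisymm h1 hw
      have := hstab _ _ h (by simpa using h2)
      simp at this
      exact absurd this (not_lt.2 hij.le)

/-- The standardization of a word, defined via unique choice from `IsStd`. -/
def std {A : Type*} [LinearOrder A] {n : ℕ} (w : Fin n → A) : Equiv.Perm (Fin n) :=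
  Classical.choose (exists_isStd w)

/-- A word `w : Fin n → A`, viewed as a monomial (element of the free monoid) inside the
free associative algebra `ℚ⟨A⟩ = MonoidAlgebra ℚ (FreeMonoid A)`. -/
def wordAlg {A : Type*} {n : ℕ} (w : Fin n → A) : MonoidAlgebra ℚ (FreeMonoid A) :=
  MonoidAlgebra.of ℚ (FreeMonoid A) (FreeMonoid.ofList (List.ofFn w))

/-- The free quasi-ribbon `F_σ(A) = Σ_{w : Std(w) = σ⁻¹} w ∈ ℚ⟨A⟩`. -/
def FQR (A : Type*) [LinearOrder A] [Fintype A] {n : ℕ} (σ : Equiv.Perm (Fin n)) :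
    MonoidAlgebra ℚ (FreeMonoid A) :=
  ∑ w ∈ Finset.univ.filter (fun w : Fin n → A => std w = σ⁻¹), wordAlg w

/-- The shifted shuffle `α ⧢ β[k]`: the set of `σ ∈ S_{k+l}` such that the subword of the
one-line word of `σ` (0-based values) formed by the letters `< k` is the one-line word of `α`,
and the subword formed by the letters `≥ k` is the one-line word of `β` shifted by `k`. -/
def shiftedShuffle {k l : ℕ} (α : Equiv.Perm (Fin k)) (β : Equiv.Perm (Fin l)) :
    Finset (Equiv.Perm (Fin (k + l))) :=
  Finset.univ.filter (fun σ =>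
    ((List.ofFn fun i : Fin (k + l) => (σ i : ℕ)).filter fun x => x < k)
        = (List.ofFn fun i : Fin k => (α i : ℕ)) ∧
    ((List.ofFn fun i : Fin (k + l) => (σ i : ℕ)).filter fun x => k ≤ x)
        = (List.ofFn fun i : Fin l => (β i : ℕ) + k))


/-- Uniqueness of standardization. -/
theorem isStd_unique {A : Type*} [LinearOrder A] {n : ℕ} {w : Fin n → A}
    {σ τ : Equiv.Perm (Fin n)} (hσ : IsStd w σ) (hτ : IsStd w τ) : σ = τ := by
  have key : ∀ i j : Fin n, σ i < σ j ↔ τ i < τ j := by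
    intro i j
    rcases lt_trichotomy i j with h | rfl | h
    · rw [hσ i j h, hτ i j h]
    · simp
    · constructor
      · intro hs
        by_contra hns
        rcases lt_or_eq_of_le (not_lt.1 hns) with h2 | h2
        · rw [hτ j i h] at h2
          rw [← hσ j i h] at h2
          exact absurd hs (not_lt.2 h2.le)
        · exact absurd (τ.injective h2) (ne_of_lt h)
      · intro hs
        by_contra hns
        rcases lt_or_eq_of_le (not_lt.1 hns) with h2 | h2
        · rw [hσ j i h] at h2
          rw [← hτ j i h] at h2
          exact absurd hs (not_lt.2 h2.le)
        · exact absurd (σ.injective h2) (ne_of_lt h)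
  have hsm : StrictMono (fun x => σ (τ.symm x)) := by
    intro a b hab
    exact (key (τ.symm a) (τ.symm b)).2 (by simpa using hab)
  have hid : (fun x => σ (τ.symm x)) = id := by
    apply (StrictMono.range_inj hsm strictMono_id).1
    have h1 : Set.range (fun x => σ (τ.symm x)) = Set.univ :=
      Function.Surjective.range_eq (σ.surjective.comp τ.symm.surjective)
    simpa using h1
  apply Equiv.ext
  intro x
  have := congrFun hid (τ x)
  simpa using this

theorem isStd_std {A : Type*} [LinearOrder A] {n : ℕ} (w : Fin n → A) : IsStd w (std w) :=
  Classical.choose_spec (exists_isStd w)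

theorem std_eq_iff {A : Type*} [LinearOrder A] {n : ℕ} {w : Fin n → A} {σ : Equiv.Perm (Fin n)} :
    std w = σ ↔ IsStd w σ :=
  ⟨fun h => h ▸ isStd_std w, fun h => isStd_unique (isStd_std w) h⟩

/-- Standardization of a subword vs strict monotonicity of the pattern. -/
theorem std_comp_iff {A : Type*} [LinearOrder A] {n m : ℕ} (w : Fin n → A)
    (e : Fin m → Fin n) (he : StrictMono e) (α : Equiv.Perm (Fin m)) :
    std (w ∘ e) = α⁻¹ ↔ StrictMono (fun a => std w (e (α a))) := by
  set τ := std w with hτ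
  have P : IsStd w τ := isStd_std w
  have Pu : ∀ i j : Fin m, i < j → (τ (e i) < τ (e j) ↔ w (e i) ≤ w (e j)) :=
    fun i j h => P (e i) (e j) (he h)
  rw [std_eq_iff]
  constructor
  · intro hstd a b hab
    rcases lt_trichotomy (α a) (α b) with h | h | h
    · exact (Pu _ _ h).2 ((hstd (α a) (α b) h).1 (by simpa using hab))
    · exact absurd (α.injective h) (ne_of_lt hab)
    · have h2 : ¬ w (e (α b)) ≤ w (e (α a)) := by
        intro hc
        exact (by simpa using not_lt.2 hab.le :
          ¬ (α⁻¹ : Equiv.Perm (Fin m)) (α b) < (α⁻¹ : Equiv.Perm (Fin m)) (α a))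
          ((hstd (α b) (α a) h).2 hc)
      have h3 : ¬ τ (e (α b)) < τ (e (α a)) := fun hc => h2 ((Pu _ _ h).1 hc)
      have hne : τ (e (α a)) ≠ τ (e (α b)) :=
        fun hc => (ne_of_gt h) (he.injective (τ.injective hc))
      exact lt_of_le_of_ne (not_lt.1 h3) hne
  · intro hg i j hij
    have h1 : α⁻¹ i < α⁻¹ j ↔ τ (e (α (α⁻¹ i))) < τ (e (α (α⁻¹ j))) := hg.lt_iff_lt.symm
    simp only [show ∀ x, α (α⁻¹ x) = x from fun x => by simp] at h1
    rw [h1, Function.comp_apply, Function.comp_apply]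
    exact Pu i j hij

theorem sort_eq_ofFn {n k : ℕ} (s : Finset (Fin n)) (h : s.card = k) :
    s.sort (· ≤ ·) = List.ofFn (fun j => s.orderEmbOfFin h j) := by
  apply List.ext_getElem
  · simp [Finset.length_sort, h]
  · intro i h1 h2
    simp only [List.getElem_ofFn]
    rw [Finset.orderEmbOfFin_apply]
    simp

/-- filter of a list `ofFn f` as `ofFn` over the monotone enumeration of good indices. -/
theorem filter_ofFn {n k : ℕ} {β : Type*} (f : Fin n → β) (p : β → Prop) [DecidablePred p]
    (h : (Finset.univ.filter (fun i => p (f i))).card = k) :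
    (List.ofFn f).filter (fun x => p x) =
      List.ofFn (fun j : Fin k =>
        f ((Finset.univ.filter (fun i => p (f i))).orderEmbOfFin h j)) := by
  set s := Finset.univ.filter (fun i => p (f i)) with hs
  rw [List.ofFn_eq_map, List.filter_map]
  have h2 : (List.finRange n).filter ((fun x => decide (p x)) ∘ f) = s.sort (· ≤ ·) := by
    refine (fun hp h1 h2 => List.Perm.eq_of_pairwise' (r := (· ≤ ·)) h1 h2 hp) ?_ ?_ ?_
    · rw [List.perm_ext_iff_of_nodup ((List.nodup_finRange n).filter _) (Finset.sort_nodup _ _)]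
      intro a
      simp [hs]
    · exact List.Pairwise.filter _ ((List.pairwise_lt_finRange n).imp le_of_lt)
    · exact Finset.pairwise_sort _ _
  rw [h2, sort_eq_ofFn s h, List.map_ofFn]
  rfl

/-- Generic characterization of one filter condition in the shifted shuffle. -/
theorem filter_eq_iff_strictMono {k l m : ℕ} (σ : Equiv.Perm (Fin (k + l)))
    (p : ℕ → Prop) [DecidablePred p] (t : Fin m → Fin (k + l))
    (ht : Function.Injective t) (htp : ∀ x : Fin (k + l), p x ↔ ∃ j, t j = x)
    (target : Fin m → ℕ) (htv : ∀ j, (t j : ℕ) = target j) :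
    ((List.ofFn fun i : Fin (k + l) => (σ i : ℕ)).filter fun x => p x)
        = List.ofFn target ↔ StrictMono (fun j => σ⁻¹ (t j)) := by
  set s := Finset.univ.filter (fun i => p ((σ i : Fin (k+l)) : ℕ)) with hs
  have hsim : s = Finset.image (fun j : Fin m => σ⁻¹ (t j)) Finset.univ := by
    ext i
    simp only [hs, Finset.mem_filter, Finset.mem_univ, true_and, Finset.mem_image]
    rw [htp (σ i)]
    constructor
    · rintro ⟨j, hj⟩
      exact ⟨j, by rw [hj]; simp⟩
    · rintro ⟨j, hj⟩
      exact ⟨j, by rw [← hj]; simp⟩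
  have hinj : Function.Injective (fun j : Fin m => σ⁻¹ (t j)) :=
    fun a b hab => ht (σ⁻¹.injective hab)
  have hcard : s.card = m := by
    rw [hsim, Finset.card_image_of_injective _ hinj]
    simp
  rw [filter_ofFn (fun i => ((σ i : Fin (k+l)) : ℕ)) p hcard]
  rw [List.ofFn_inj]
  set emb := (Finset.univ.filter fun i => p ((σ i : Fin (k+l)) : ℕ)).orderEmbOfFin hcard with hemb
  constructor
  · intro hfun
    have heq : (fun j : Fin m => σ⁻¹ (t j)) = fun j => emb j := by
      funext j
      have h1 : ((σ (emb j) : Fin (k+l)) : ℕ) = target j := congrFun hfun j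
      have h2 : σ (emb j) = t j := by
        apply Fin.ext
        rw [h1, htv]
      rw [← h2]
      simp
    rw [heq]
    exact fun a b hab => (Finset.orderEmbOfFin _ hcard).strictMono hab
  · intro hsm
    have hmem : ∀ j, (fun j : Fin m => σ⁻¹ (t j)) j ∈ s := by
      intro j
      rw [hsim]
      exact Finset.mem_image_of_mem _ (Finset.mem_univ j)
    have huniq := Finset.orderEmbOfFin_unique hcard (f := fun j : Fin m => σ⁻¹ (t j)) hmem hsm
    funext j
    have h1 : σ⁻¹ (t j) = emb j := congrFun huniq j
    have h2 : σ (emb j) = t j := by rw [← h1]; simp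
    rw [h2, htv]

theorem mem_shiftedShuffle_iff_s0 {k l : ℕ} (α : Equiv.Perm (Fin k)) (β : Equiv.Perm (Fin l))
    (σ : Equiv.Perm (Fin (k + l))) :
    σ ∈ shiftedShuffle α β ↔
      StrictMono (fun a : Fin k => σ⁻¹ (Fin.castAdd l (α a))) ∧
      StrictMono (fun b : Fin l => σ⁻¹ (Fin.natAdd k (β b))) := by
  rw [shiftedShuffle, Finset.mem_filter]
  simp only [Finset.mem_univ, true_and]
  have e1 := filter_eq_iff_strictMono σ (fun x => x < k) (fun a : Fin k => Fin.castAdd l (α a))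
      (fun a b hab => α.injective (Fin.castAdd_injective _ _ hab))
      (by
        intro x
        constructor
        · intro hx
          exact ⟨α⁻¹ ⟨(x : ℕ), hx⟩, by simp [Fin.ext_iff]⟩
        · rintro ⟨j, rfl⟩
          simp)
      (fun a => ((α a : Fin k) : ℕ)) (fun j => by simp)
  have e2 := filter_eq_iff_strictMono σ (fun x => k ≤ x) (fun b : Fin l => Fin.natAdd k (β b))
      (fun a b hab => β.injective (by apply Fin.ext; have := congrArg Fin.val hab; simpa using this))
      (by
        intro x
        constructor
        · intro hx
          refine ⟨β⁻¹ ⟨(x : ℕ) - k, by omega⟩, ?_⟩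
          apply Fin.ext
          simp
          omega
        · rintro ⟨j, rfl⟩
          simp)
      (fun b => ((β b : Fin l) : ℕ) + k) (fun j => by simp [Nat.add_comm])
  rw [e1, e2]

theorem wordAlg_mul {A : Type*} {k l : ℕ} (u : Fin k → A) (v : Fin l → A) :
    wordAlg u * wordAlg v = wordAlg (Fin.append u v) := by
  unfold wordAlg
  rw [← map_mul, ← FreeMonoid.ofList_append]
  congr 2
  rw [List.ofFn_add]
  congr 1 <;> rw [List.ofFn_inj] <;> funext i <;> simp [Fin.append_left, Fin.append_right]

theorem inv_std_mem_shiftedShuffle_iff {A : Type*} [LinearOrder A] {k l : ℕ}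
    (α : Equiv.Perm (Fin k)) (β : Equiv.Perm (Fin l)) (w : Fin (k + l) → A) :
    (std w)⁻¹ ∈ shiftedShuffle α β ↔
      std (w ∘ Fin.castAdd l) = α⁻¹ ∧ std (w ∘ Fin.natAdd k) = β⁻¹ := by
  rw [mem_shiftedShuffle_iff_s0]
  simp only [inv_inv]
  rw [std_comp_iff w (Fin.castAdd l) (Fin.strictMono_castAdd l) α,
      std_comp_iff w (Fin.natAdd k) (Fin.strictMono_natAdd k) β]

theorem FQR_mul {A : Type*} [LinearOrder A] [Fintype A] {k l : ℕ}
    (α : Equiv.Perm (Fin k)) (β : Equiv.Perm (Fin l)) :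
    FQR A α * FQR A β = ∑ σ ∈ shiftedShuffle α β, FQR A σ := by
  classical
  set T : Finset (Fin (k + l) → A) := Finset.univ.filter
    (fun w => std (w ∘ Fin.castAdd l) = α⁻¹ ∧ std (w ∘ Fin.natAdd k) = β⁻¹) with hT
  have hRHS : ∑ σ ∈ shiftedShuffle α β, FQR A σ = ∑ w ∈ T, wordAlg w := by
    unfold FQR
    calc ∑ σ ∈ shiftedShuffle α β,
          ∑ w ∈ Finset.univ.filter (fun w : Fin (k+l) → A => std w = σ⁻¹), wordAlg w
        = ∑ σ ∈ shiftedShuffle α β, ∑ w : Fin (k+l) → A,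
            if std w = σ⁻¹ then wordAlg w else 0 := by
          exact Finset.sum_congr rfl fun σ _ => Finset.sum_filter _ _
      _ = ∑ w : Fin (k+l) → A, ∑ σ ∈ shiftedShuffle α β,
            if std w = σ⁻¹ then wordAlg w else 0 := Finset.sum_comm
      _ = ∑ w : Fin (k+l) → A, if (std w)⁻¹ ∈ shiftedShuffle α β then wordAlg w else 0 := by
          refine Finset.sum_congr rfl fun w _ => ?_
          calc ∑ σ ∈ shiftedShuffle α β, (if std w = σ⁻¹ then wordAlg w else 0)
              = ∑ σ ∈ shiftedShuffle α β, (if σ = (std w)⁻¹ then wordAlg w else 0) := by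
                refine Finset.sum_congr rfl fun σ _ => ?_
                congr 1
                apply propext
                constructor
                · intro h; rw [h, inv_inv]
                · intro h; rw [h, inv_inv]
            _ = if (std w)⁻¹ ∈ shiftedShuffle α β then wordAlg w else 0 :=
                Finset.sum_ite_eq' _ _ _
      _ = ∑ w ∈ Finset.univ.filter
            (fun w : Fin (k+l) → A => (std w)⁻¹ ∈ shiftedShuffle α β), wordAlg w :=
          (Finset.sum_filter _ _).symm
      _ = ∑ w ∈ T, wordAlg w := by
          refine Finset.sum_congr ?_ fun _ _ => rfl
          rw [hT]
          refine Finset.filter_congr fun w _ => ?_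
          simpa using inv_std_mem_shiftedShuffle_iff α β w
  rw [hRHS]
  unfold FQR
  calc (∑ u ∈ Finset.univ.filter (fun u : Fin k → A => std u = α⁻¹), wordAlg u) *
        (∑ v ∈ Finset.univ.filter (fun v : Fin l → A => std v = β⁻¹), wordAlg v)
      = ∑ u ∈ Finset.univ.filter (fun u : Fin k → A => std u = α⁻¹),
          ∑ v ∈ Finset.univ.filter (fun v : Fin l → A => std v = β⁻¹),
            wordAlg u * wordAlg v := Finset.sum_mul_sum _ _ _ _
    _ = ∑ p ∈ (Finset.univ.filter (fun u : Fin k → A => std u = α⁻¹)) ×ˢ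
          (Finset.univ.filter (fun v : Fin l → A => std v = β⁻¹)),
            wordAlg (Fin.append p.1 p.2) := by
        rw [Finset.sum_product]
        exact Finset.sum_congr rfl fun u _ => Finset.sum_congr rfl fun v _ => wordAlg_mul u v
    _ = ∑ w ∈ T, wordAlg w := by
        refine Finset.sum_nbij' (fun p => Fin.append p.1 p.2)
          (fun w => (w ∘ Fin.castAdd l, w ∘ Fin.natAdd k)) ?_ ?_ ?_ ?_ ?_
        · intro p hp
          simp only [Finset.mem_product, Finset.mem_filter, Finset.mem_univ, true_and] at hp
          rw [hT, Finset.mem_filter]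
          refine ⟨Finset.mem_univ _, ?_, ?_⟩
          · have e1 : Fin.append p.1 p.2 ∘ Fin.castAdd l = p.1 :=
              funext fun i => Fin.append_left _ _ i
            rw [e1]; exact hp.1
          · have e2 : Fin.append p.1 p.2 ∘ Fin.natAdd k = p.2 :=
              funext fun i => Fin.append_right _ _ i
            rw [e2]; exact hp.2
        · intro w hw
          rw [hT, Finset.mem_filter] at hw
          simp only [Finset.mem_product, Finset.mem_filter, Finset.mem_univ, true_and]
          exact hw.2
        · intro p hp
          have e1 : Fin.append p.1 p.2 ∘ Fin.castAdd l = p.1 :=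
            funext fun i => Fin.append_left _ _ i
          have e2 : Fin.append p.1 p.2 ∘ Fin.natAdd k = p.2 :=
            funext fun i => Fin.append_right _ _ i
          show (Fin.append p.1 p.2 ∘ Fin.castAdd l, Fin.append p.1 p.2 ∘ Fin.natAdd k) = p
          rw [e1, e2]
        · intro w hw
          exact Fin.append_castAdd_natAdd
        · intro p hp
          rfl

/-- For a finite linearly ordered alphabet `A`, `α ∈ S_k`, `β ∈ S_l`, one has
`F_α(A) · F_β(A) = Σ_{σ ∈ α ⧢ β[k]} F_σ(A)` in `ℚ⟨A⟩`; in particular, the linear span of the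
free quasi-ribbons is closed under multiplication. -/
theorem freeQuasiRibbon_mul (A : Type*) [LinearOrder A] [Fintype A] :
    (∀ {k l : ℕ} (α : Equiv.Perm (Fin k)) (β : Equiv.Perm (Fin l)),
      FQR A α * FQR A β = ∑ σ ∈ shiftedShuffle α β, FQR A σ) ∧
    (∀ x y : MonoidAlgebra ℚ (FreeMonoid A),
      x ∈ Submodule.span ℚ {z | ∃ (n : ℕ) (σ : Equiv.Perm (Fin n)), z = FQR A σ} →
      y ∈ Submodule.span ℚ {z | ∃ (n : ℕ) (σ : Equiv.Perm (Fin n)), z = FQR A σ} →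
      x * y ∈ Submodule.span ℚ {z | ∃ (n : ℕ) (σ : Equiv.Perm (Fin n)), z = FQR A σ}) := by
  constructor
  · intro k l α β
    exact FQR_mul α β
  · intro x y hx hy
    set S := Submodule.span ℚ {z : MonoidAlgebra ℚ (FreeMonoid A) |
      ∃ (n : ℕ) (σ : Equiv.Perm (Fin n)), z = FQR A σ} with hS
    refine Submodule.span_induction (p := fun x _ => x * y ∈ S) ?_ ?_ ?_ ?_ hx
    · rintro z ⟨n, σ, rfl⟩
      refine Submodule.span_induction (p := fun y _ => FQR A σ * y ∈ S) ?_ ?_ ?_ ?_ hy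
      · rintro z' ⟨m, τ, rfl⟩
        rw [FQR_mul σ τ]
        exact Submodule.sum_mem _ fun ρ _ => Submodule.subset_span ⟨n + m, ρ, rfl⟩
      · show FQR A σ * 0 ∈ S
        rw [mul_zero]; exact Submodule.zero_mem _
      · intro a b _ _ ha hb
        show FQR A σ * (a + b) ∈ S
        rw [mul_add]; exact Submodule.add_mem _ ha hb
      · intro c a _ ha
        show FQR A σ * (c • a) ∈ S
        rw [mul_smul_comm]; exact Submodule.smul_mem _ _ ha
    · show (0 : MonoidAlgebra ℚ (FreeMonoid A)) * y ∈ S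
      rw [zero_mul]; exact Submodule.zero_mem _
    · intro a b _ _ ha hb
      show (a + b) * y ∈ S
      rw [add_mul]; exact Submodule.add_mem _ ha hb
    · intro c a _ ha
      show (c • a) * y ∈ S
      rw [smul_mul_assoc]; exact Submodule.smul_mem _ _ ha

end
end

section
/- Let α ∈ S_k, β ∈ S_l and γ ∈ S_{k+l}. Then γ ∈ α ⧢ β[k] if and only if the standardization of the word (γ⁻¹)(1)⋯(γ⁻¹)(k) equals α⁻¹ and the standardization of the word (γ⁻¹)(k+1)⋯(γ⁻¹)(k+l) equals β⁻¹. (This identity of structure constants expresses that the bialgebra FQSym is self-dual: ⟨F ⊗ G, ΔH⟩ = ⟨FG, H⟩ for the pairing ⟨F_σ, F_τ⟩ = δ_{σ⁻¹,τ}.) -/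
open scoped Classical

noncomputable section

/-- Key lemma: the filtered one-line word of `γ` equals the one-line word of `e ∘ δ`
iff `δ⁻¹` is the standardization of `i ↦ γ⁻¹ (e i)`. -/
theorem key_filter_iff_isStd {n m : ℕ} (e : Fin m ↪o Fin n) (p : ℕ → Prop) [DecidablePred p]
    (hp : ∀ x : Fin n, p (x : ℕ) ↔ ∃ i, e i = x)
    (γ : Equiv.Perm (Fin n)) (δ : Equiv.Perm (Fin m)) :
    ((List.ofFn fun i : Fin n => (γ i : ℕ)).filter (fun x => p x))
        = (List.ofFn fun i : Fin m => ((e (δ i) : Fin n) : ℕ)) ↔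
      IsStd (fun i : Fin m => γ⁻¹ (e i)) δ⁻¹ := by
  classical
  set F : Fin m → Fin n := fun i => γ⁻¹ (e i) with hF
  have hFinj : Function.Injective F := by
    intro a b h
    apply e.injective
    have h' := congrArg γ h
    simpa only [hF, Equiv.Perm.inv_def, Equiv.apply_symm_apply] using h'
  set S : Finset (Fin n) := Finset.univ.filter (fun i => p ((γ i : Fin n) : ℕ)) with hS
  have hmemS : ∀ x : Fin n, x ∈ S ↔ p ((γ x : Fin n) : ℕ) := by
    intro x; simp [hS]
  have hSeq : S = Finset.univ.map ⟨F, hFinj⟩ := by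
    ext x
    simp only [hmemS, Finset.mem_map, Finset.mem_univ, true_and,
      Function.Embedding.coeFn_mk]
    rw [hp]
    constructor
    · rintro ⟨i, hi⟩; exact ⟨i, by simp [hF, hi]⟩
    · rintro ⟨i, hi⟩; exact ⟨i, by rw [← hi]; simp [hF]⟩
  have hcard : S.card = m := by rw [hSeq]; simp
  have hFS : ∀ i, F i ∈ S := by
    intro i; rw [hSeq]; exact Finset.mem_map_of_mem _ (Finset.mem_univ i)
  -- the filtered list equals the mapped sorted position list
  have h1 : ((List.ofFn fun i : Fin n => (γ i : ℕ)).filter (fun x => p x))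
      = ((List.finRange n).filter (fun i => p ((γ i : Fin n) : ℕ))).map
          (fun i => ((γ i : Fin n) : ℕ)) := by
    rw [List.ofFn_eq_map, List.filter_map]
    rfl
  set T : List (Fin n) := (List.finRange n).filter (fun i => p ((γ i : Fin n) : ℕ)) with hT
  have hTpair : T.Pairwise (· < ·) := (List.pairwise_lt_finRange n).filter _
  have hTnodup : T.Nodup := hTpair.imp ne_of_lt
  have hTsorted : T.Pairwise (· ≤ ·) := hTpair.imp le_of_lt
  have hTfinset : T.toFinset = S := by
    ext x; simp [hT, hS, List.mem_filter]
  have hTsort : T = S.sort (· ≤ ·) := by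
    refine List.Perm.eq_of_pairwise' hTsorted (Finset.pairwise_sort _ _) ?_
    exact List.perm_of_nodup_nodup_toFinset_eq hTnodup (Finset.sort_nodup _ _)
      (by rw [hTfinset, Finset.sort_toFinset])
  have hsortOfFn : S.sort (· ≤ ·) = List.ofFn (fun i : Fin m => S.orderEmbOfFin hcard i) := by
    apply List.ext_getElem
    · simp [Finset.length_sort, hcard]
    · intro i h1' h2'
      simp only [List.getElem_ofFn]
      rw [Finset.orderEmbOfFin_apply]
      rfl
  have h2 : ((List.ofFn fun i : Fin n => (γ i : ℕ)).filter (fun x => p x))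
      = List.ofFn (fun i : Fin m => ((γ (S.orderEmbOfFin hcard i) : Fin n) : ℕ)) := by
    rw [h1, hTsort, hsortOfFn, List.map_ofFn]
    rfl
  rw [h2, List.ofFn_inj]
  -- reduce to a pointwise statement
  have step1 : ((fun i : Fin m => ((γ (S.orderEmbOfFin hcard i) : Fin n) : ℕ))
      = fun i : Fin m => ((e (δ i) : Fin n) : ℕ)) ↔ (F ∘ δ) = ⇑(S.orderEmbOfFin hcard) := by
    rw [funext_iff, funext_iff]
    constructor
    · intro h i
      have := Fin.val_injective (h i)
      have : S.orderEmbOfFin hcard i = γ⁻¹ (e (δ i)) := by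
        apply γ.injective; simp [this]
      simp [Function.comp, hF, this]
    · intro h i
      have := h i
      simp only [Function.comp, hF] at this
      rw [← this]
      simp
  rw [step1]
  have step2 : (F ∘ δ) = ⇑(S.orderEmbOfFin hcard) ↔ StrictMono (F ∘ δ) := by
    constructor
    · intro h; rw [h]; exact (S.orderEmbOfFin hcard).strictMono
    · intro h
      exact Finset.orderEmbOfFin_unique hcard (fun x => hFS _) h
  rw [step2]
  -- StrictMono (F ∘ δ) ↔ IsStd F δ⁻¹
  constructor
  · intro h i j hij
    have hiff : δ⁻¹ i < δ⁻¹ j ↔ F i < F j := by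
      have := h.lt_iff_lt (a := δ⁻¹ i) (b := δ⁻¹ j)
      simpa using this.symm
    rw [hiff]
    constructor
    · exact le_of_lt
    · intro hle
      exact lt_of_le_of_ne hle (fun hcon => absurd (hFinj hcon) (ne_of_lt hij))
  · intro h a b hab
    simp only [Function.comp]
    rcases lt_trichotomy (δ a) (δ b) with hlt | heq | hgt
    · have := (h _ _ hlt).mpr
      have hle : F (δ a) ≤ F (δ b) := by
        by_contra hcon
        push_neg at hcon
        have : δ⁻¹ (δ a) < δ⁻¹ (δ b) := by simpa using hab
        have := (h _ _ hlt).mp this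
        exact absurd this (not_le_of_gt hcon)
      exact lt_of_le_of_ne hle (fun hcon => absurd (hFinj hcon) (ne_of_lt hlt))
    · exact absurd (δ.injective heq) (ne_of_lt hab)
    · have hnot : ¬ (δ⁻¹ (δ b) < δ⁻¹ (δ a)) := by simpa using not_lt_of_gt hab
      have := (h _ _ hgt)
      rw [this] at hnot
      exact lt_of_not_ge hnot

/-- `γ ∈ α ⧢ β[k]` iff the standardization of the word
`γ⁻¹(1)⋯γ⁻¹(k)` is `α⁻¹` and the standardization of `γ⁻¹(k+1)⋯γ⁻¹(k+l)` is `β⁻¹`. -/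
theorem mem_shiftedShuffle_iff {k l : ℕ} (α : Equiv.Perm (Fin k)) (β : Equiv.Perm (Fin l))
    (γ : Equiv.Perm (Fin (k + l))) :
    γ ∈ shiftedShuffle α β ↔
      (IsStd (fun i : Fin k => γ⁻¹ ⟨(i : ℕ), by omega⟩) α⁻¹ ∧
       IsStd (fun i : Fin l => γ⁻¹ ⟨k + (i : ℕ), by omega⟩) β⁻¹) := by
  classical
  rw [shiftedShuffle, Finset.mem_filter]
  simp only [Finset.mem_univ, true_and]
  have key1 := key_filter_iff_isStd (Fin.castAddOrderEmb (n := k) l) (fun x => x < k)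
      (by
        intro x
        constructor
        · intro hx; exact ⟨⟨(x : ℕ), hx⟩, by ext; simp⟩
        · rintro ⟨i, rfl⟩; simp [Fin.castAddOrderEmb_apply]) γ α
  have key2 := key_filter_iff_isStd (Fin.natAddOrderEmb (m := l) k) (fun x => k ≤ x)
      (by
        intro x
        constructor
        · intro hx
          refine ⟨⟨(x : ℕ) - k, by omega⟩, by ext; simp [Fin.natAddOrderEmb_apply]; omega⟩
        · rintro ⟨i, rfl⟩; simp [Fin.natAddOrderEmb_apply]) γ β
  have l1 : (List.ofFn fun i : Fin k => (((Fin.castAddOrderEmb (n := k) l) (α i) : Fin (k + l)) : ℕ))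
      = List.ofFn fun i : Fin k => (α i : ℕ) := by
    simp [Fin.castAddOrderEmb_apply]
  have l2 : (List.ofFn fun i : Fin l => (((Fin.natAddOrderEmb (m := l) k) (β i) : Fin (k + l)) : ℕ))
      = List.ofFn fun i : Fin l => (β i : ℕ) + k := by
    simp [Fin.natAddOrderEmb_apply, Nat.add_comm]
  rw [l1] at key1
  rw [l2] at key2
  have f1 : (fun i : Fin k => γ⁻¹ ((Fin.castAddOrderEmb (n := k) l) i))
      = fun i : Fin k => γ⁻¹ ⟨(i : ℕ), by omega⟩ := by
    funext i; congr 1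
  have f2 : (fun i : Fin l => γ⁻¹ ((Fin.natAddOrderEmb (m := l) k) i))
      = fun i : Fin l => γ⁻¹ ⟨k + (i : ℕ), by omega⟩ := by
    funext i; congr 1
  rw [f1] at key1
  rw [f2] at key2
  rw [key1, key2]

end
end

section
/- Let σ ∈ Sₙ have its (unique) maximal factorization σ = σ₁ • ⋯ • σ_r into connected permutations σᵢ ∈ S_{kᵢ}, and identify permutations with their one-line words. Consider the iterated shifted q-shuffle F^σ := (⋯((σ₁ ⧢_q σ₂[k₁]) ⧢_q σ₃[k₁+k₂]) ⋯) ⧢_q σ_r[k₁+⋯+k_{r−1}], where τ[m] denotes the word obtained from τ by adding m to every letter, and write F^σ = Σ_{τ ∈ Sₙ} c_τ(q)·τ with c_τ(q) ∈ ℚ[q]. Then c_σ(q) = 1, and for every τ ≠ σ the polynomial c_τ(q) has zero constant term and c_τ = 0 unless the one-line word of σ is lexicographically smaller than that of τ. (Hence the transition matrix between the families (F^σ) and (F_σ) is unitriangular and invertible over ℚ[q], so the algebras FQSym_q for different q are pairwise isomorphic.) -/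
noncomputable section

/-- A permutation of unspecified size. -/
def SigmaPerm : Type := Σ n : ℕ, Equiv.Perm (Fin n)

/-- Shifted concatenation of permutations: the one-line word of `sconcat ⟨k, α⟩ ⟨l, β⟩` is
`α(1)⋯α(k) (β(1)+k)⋯(β(l)+k)`. -/
def sconcat (p q : SigmaPerm) : SigmaPerm :=
  ⟨p.1 + q.1, finSumFinEquiv.permCongr (p.2.sumCongr q.2)⟩

/-- Iterated shifted concatenation of a list of permutations. -/
def sconcatList (L : List SigmaPerm) : SigmaPerm :=
  L.foldr sconcat ⟨0, 1⟩

/-- Connectedness of a permutation. -/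
def IsConnectedPerm (p : SigmaPerm) : Prop :=
  0 < p.1 ∧ ∀ k : ℕ, 0 < k → k < p.1 → ∃ i : Fin p.1, (i : ℕ) < k ∧ k ≤ ((p.2 i : Fin p.1) : ℕ)

/-- The `q`-shuffle product of two words, with values in `ℚ[q]`-linear combinations of words:
`u ⧢_q ε = u`, `ε ⧢_q v = v`, and
`(au) ⧢_q (bv) = a(u ⧢_q bv) + q^{|au|} b(au ⧢_q v)`. -/
def qshuffle {α : Type*} : List α → List α → (List α →₀ Polynomial ℚ)
  | [], v => Finsupp.single v 1
  | u, [] => Finsupp.single u 1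
  | a :: u, b :: v =>
      Finsupp.mapDomain (List.cons a) (qshuffle u (b :: v)) +
        (Polynomial.X : Polynomial ℚ) ^ (u.length + 1) •
          Finsupp.mapDomain (List.cons b) (qshuffle (a :: u) v)
  termination_by u v => u.length + v.length
  decreasing_by all_goals simp

/-- `q`-shuffle of a linear combination of words with a word (extension by linearity). -/
def qshuffleL {α : Type*} (f : List α →₀ Polynomial ℚ) (v : List α) :
    List α →₀ Polynomial ℚ :=
  f.sum fun u c => c • qshuffle u v

/-- One-line word of a permutation (with 0-based letters). -/
def oneLine {n : ℕ} (σ : Equiv.Perm (Fin n)) : List ℕ :=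
  List.ofFn fun i => (σ i : ℕ)

/-- Iterated shifted `q`-shuffle: `Fiter f m L` successively `q`-shuffles `f` with the one-line
words of the permutations in `L`, each shifted by the accumulated sizes (starting from `m`). -/
def Fiter : (List ℕ →₀ Polynomial ℚ) → ℕ → List SigmaPerm → (List ℕ →₀ Polynomial ℚ)
  | f, _, [] => f
  | f, m, p :: L => Fiter (qshuffleL f ((oneLine p.2).map (· + m))) (m + p.1) L

namespace Aux

theorem mapDomain_cons_apply (g : List ℕ →₀ Polynomial ℚ) (a : ℕ) (w : List ℕ) :
    Finsupp.mapDomain (List.cons a) g (a :: w) = g w :=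
  Finsupp.mapDomain_apply (List.cons_injective) g w

theorem mapDomain_cons_ne (g : List ℕ →₀ Polynomial ℚ) {a c : ℕ} (w : List ℕ) (h : c ≠ a) :
    Finsupp.mapDomain (List.cons a) g (c :: w) = 0 :=
  Finsupp.mapDomain_notin_range _ _ (by rintro ⟨l, hl⟩; cases hl; exact h rfl)

theorem mapDomain_cons_nil (g : List ℕ →₀ Polynomial ℚ) (a : ℕ) :
    Finsupp.mapDomain (List.cons a) g [] = 0 :=
  Finsupp.mapDomain_notin_range _ _ (by rintro ⟨l, hl⟩; cases hl)

theorem qshuffle_nil_right (a : ℕ) (u : List ℕ) :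
    qshuffle (a :: u) [] = Finsupp.single (a :: u) 1 := by
  rw [qshuffle]
  exact fun h => nomatch h

theorem mapDomain_cons_ne_zero {g : List ℕ →₀ Polynomial ℚ} {a : ℕ} {w : List ℕ}
    (h : Finsupp.mapDomain (List.cons a) g w ≠ 0) :
    ∃ w', w = a :: w' ∧ g w' ≠ 0 := by
  cases w with
  | nil => rw [mapDomain_cons_nil] at h; exact absurd rfl h
  | cons c w' =>
    by_cases hc : c = a
    · subst hc
      rw [mapDomain_cons_apply] at h
      exact ⟨w', rfl, h⟩
    · rw [mapDomain_cons_ne _ _ hc] at h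
      exact absurd rfl h

theorem add_apply_ne_zero {F G : List ℕ →₀ Polynomial ℚ} {w : List ℕ}
    (h : (F + G) w ≠ 0) : F w ≠ 0 ∨ G w ≠ 0 := by
  by_contra hc
  push_neg at hc
  exact h (by rw [Finsupp.add_apply, hc.1, hc.2, add_zero])

theorem smul_apply_ne_zero {G : List ℕ →₀ Polynomial ℚ} {w : List ℕ} {k : ℕ}
    (h : ((Polynomial.X : Polynomial ℚ) ^ k • G) w ≠ 0) : G w ≠ 0 := by
  intro hG
  exact h (by rw [Finsupp.smul_apply, hG, smul_zero])

theorem qshuffle_perm : ∀ (u v w : List ℕ), qshuffle u v w ≠ 0 → w.Perm (u ++ v) := by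
  intro u v
  induction u, v using qshuffle.induct with
  | case1 v =>
    intro w h
    rw [qshuffle] at h
    rcases Finsupp.single_apply_ne_zero.mp h with ⟨rfl, -⟩
    simp
  | case2 u hu =>
    cases u with
    | nil => exact absurd rfl hu
    | cons a u =>
      intro w h
      rw [qshuffle_nil_right] at h
      rcases Finsupp.single_apply_ne_zero.mp h with ⟨rfl, -⟩
      simp
  | case3 a u b v ih1 ih2 =>
    intro w h
    rw [qshuffle] at h
    rcases add_apply_ne_zero h with h1 | h2
    · obtain ⟨w', rfl, hw'⟩ := mapDomain_cons_ne_zero h1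
      exact (ih1 w' hw').cons a
    · obtain ⟨w', rfl, hw'⟩ := mapDomain_cons_ne_zero (smul_apply_ne_zero h2)
      exact ((ih2 w' hw').cons b).trans List.perm_middle.symm

-- value at u ++ v is 1
theorem qshuffle_self : ∀ (u v : List ℕ), (∀ x ∈ u, ∀ y ∈ v, x < y) →
    qshuffle u v (u ++ v) = 1 := by
  intro u v
  induction u, v using qshuffle.induct with
  | case1 v => intro _; rw [qshuffle]; simp
  | case2 u hu =>
    cases u with
    | nil => exact absurd rfl hu
    | cons a u => intro _; rw [qshuffle_nil_right]; simp
  | case3 a u b v ih1 ih2 =>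
    intro hlt
    have hab : a < b := hlt a List.mem_cons_self b List.mem_cons_self
    rw [qshuffle]
    rw [Finsupp.add_apply, List.cons_append, mapDomain_cons_apply, Finsupp.smul_apply,
      mapDomain_cons_ne _ _ (Nat.ne_of_lt hab), smul_zero, add_zero]
    exact ih1 (fun x hx y hy => hlt x (List.mem_cons_of_mem a hx) y hy)

-- constant coefficient
theorem qshuffle_coeff0 : ∀ (u v w : List ℕ),
    ((qshuffle u v) w).coeff 0 = if w = u ++ v then 1 else 0 := by
  intro u v
  induction u, v using qshuffle.induct with
  | case1 v =>
    intro w; rw [qshuffle]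
    simp [Finsupp.single_apply, eq_comm]
    split <;> simp_all
  | case2 u hu =>
    cases u with
    | nil => exact absurd rfl hu
    | cons a u =>
      intro w; rw [qshuffle_nil_right]
      simp [Finsupp.single_apply, eq_comm]
      split <;> simp_all
  | case3 a u b v ih1 ih2 =>
    intro w
    rw [qshuffle, Finsupp.add_apply, Polynomial.coeff_add, Finsupp.smul_apply,
      smul_eq_mul, Polynomial.mul_coeff_zero, Polynomial.coeff_X_pow]
    simp only [Nat.zero_ne_add_one 0, if_neg (by omega : ¬ (0 = u.length + 1)), zero_mul,
      add_zero]
    cases w with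
    | nil =>
      rw [mapDomain_cons_nil]
      simp
    | cons c w' =>
      by_cases hc : c = a
      · subst hc
        rw [mapDomain_cons_apply, ih1]
        simp
      · rw [mapDomain_cons_ne _ _ hc]
        simp only [Polynomial.coeff_zero]
        rw [if_neg (by simp [List.cons_append]; intro h; exact absurd h hc)]

-- lex facts
theorem lex_trans : ∀ {x y z : List ℕ},
    List.Lex (· < ·) x y → List.Lex (· < ·) y z → List.Lex (· < ·) x z
  | _, _, _, List.Lex.nil, List.Lex.rel _ => List.Lex.nil
  | _, _, _, List.Lex.nil, List.Lex.cons _ => List.Lex.nil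
  | _, _, _, List.Lex.rel h1, List.Lex.rel h2 => List.Lex.rel (h1.trans h2)
  | _, _, _, List.Lex.rel h1, List.Lex.cons _ => List.Lex.rel h1
  | _, _, _, List.Lex.cons _, List.Lex.rel h2 => List.Lex.rel h2
  | _, _, _, List.Lex.cons h1, List.Lex.cons h2 => List.Lex.cons (lex_trans h1 h2)

theorem lex_irrefl (x : List ℕ) : ¬ List.Lex (· < ·) x x := by
  intro h
  induction x with
  | nil => cases h
  | cons a x ih =>
    cases h with
    | rel h => exact lt_irrefl _ h
    | cons h => exact ih h

theorem lex_append : ∀ (x y v v' : List ℕ), x.length = y.length →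
    List.Lex (· < ·) x y → List.Lex (· < ·) (x ++ v) (y ++ v') := by
  intro x
  induction x with
  | nil =>
    intro y v v' hl h
    cases y with
    | nil => cases h
    | cons b y => simp at hl
  | cons a x ih =>
    intro y v v' hl h
    cases y with
    | nil => cases h
    | cons b y =>
      cases h with
      | rel h => exact List.Lex.rel h
      | cons h => exact List.Lex.cons (ih y v v' (by simpa using hl) h)

theorem lex_prefix (u : List ℕ) : ∀ (v : List ℕ), v ≠ [] → List.Lex (· < ·) u (u ++ v) := by
  induction u with
  | nil =>
    intro v hv
    cases v with
    | nil => exact absurd rfl hv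
    | cons b v => exact List.Lex.nil
  | cons a u ih => intro v hv; exact List.Lex.cons (ih v hv)

theorem lex_append_le (u v w : List ℕ) (h : w = u ++ v ∨ List.Lex (· < ·) (u ++ v) w) :
    w = u ++ v ∨ List.Lex (· < ·) u w := by
  rcases h with rfl | h
  · rcases eq_or_ne v [] with rfl | hv
    · left; rfl
    · right; exact lex_prefix u v hv
  · rcases eq_or_ne v [] with rfl | hv
    · right; rwa [List.append_nil] at h
    · right; exact lex_trans (lex_prefix u v hv) h

-- L4: support triangularity
theorem qshuffle_lex : ∀ (u v : List ℕ), (∀ x ∈ u, ∀ y ∈ v, x < y) →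
    ∀ w, qshuffle u v w ≠ 0 → w = u ++ v ∨ List.Lex (· < ·) (u ++ v) w := by
  intro u v
  induction u, v using qshuffle.induct with
  | case1 v =>
    intro _ w h
    rw [qshuffle] at h
    left
    simpa using (Finsupp.single_apply_ne_zero.mp h).1
  | case2 u hu =>
    cases u with
    | nil => exact absurd rfl hu
    | cons a u =>
      intro _ w h
      rw [qshuffle_nil_right] at h
      left
      rw [List.append_nil]
      exact (Finsupp.single_apply_ne_zero.mp h).1
  | case3 a u b v ih1 ih2 =>
    intro hlt w h
    have hab : a < b := hlt a List.mem_cons_self b List.mem_cons_self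
    rw [qshuffle] at h
    rcases add_apply_ne_zero h with h1 | h2
    · obtain ⟨w', rfl, hw'⟩ := mapDomain_cons_ne_zero h1
      rcases ih1 (fun x hx y hy => hlt x (List.mem_cons_of_mem a hx) y hy) w' hw' with rfl | hl
      · left; rfl
      · right; exact List.Lex.cons hl
    · obtain ⟨w', rfl, hw'⟩ := mapDomain_cons_ne_zero (smul_apply_ne_zero h2)
      right
      exact List.Lex.rel hab



def Inv (f : List ℕ →₀ Polynomial ℚ) (s : List ℕ) (m : ℕ) : Prop :=
  f s = 1 ∧ (∀ w, w ≠ s → (f w).coeff 0 = 0) ∧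
  (∀ w, f w ≠ 0 → w = s ∨ List.Lex (· < ·) s w) ∧
  (∀ w, f w ≠ 0 → w.length = s.length) ∧
  (∀ w, f w ≠ 0 → ∀ x ∈ w, x < m)

theorem qshuffleL_apply (f : List ℕ →₀ Polynomial ℚ) (v w : List ℕ) :
    qshuffleL f v w = ∑ u ∈ f.support, f u * qshuffle u v w := by
  rw [qshuffleL, Finsupp.sum_apply, Finsupp.sum]
  refine Finset.sum_congr rfl fun u _ => ?_
  rw [Finsupp.smul_apply, smul_eq_mul]

theorem step {f : List ℕ →₀ Polynomial ℚ} {s : List ℕ} {m k : ℕ} {v : List ℕ}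
    (hf : Inv f s m) (hv : ∀ y ∈ v, m ≤ y ∧ y < m + k) :
    Inv (qshuffleL f v) (s ++ v) (m + k) := by
  obtain ⟨h1, h2, h3, h4, h5⟩ := hf
  -- for u in the support, all letters of u are below all letters of v
  have hlt : ∀ u, f u ≠ 0 → ∀ x ∈ u, ∀ y ∈ v, x < y := fun u hu x hx y hy =>
    lt_of_lt_of_le (h5 u hu x hx) (hv y hy).1
  have hsne : f s ≠ 0 := by rw [h1]; exact one_ne_zero
  have hsmem : s ∈ f.support := Finsupp.mem_support_iff.mpr hsne
  -- terms from u ≠ s never produce the word s ++ v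
  have hzero : ∀ u, f u ≠ 0 → u ≠ s → qshuffle u v (s ++ v) = 0 := by
    intro u hu hne
    by_contra h0
    have hlex : List.Lex (· < ·) s u := (h3 u hu).resolve_left hne
    have hlen : u.length = s.length := h4 u hu
    rcases qshuffle_lex u v (hlt u hu) (s ++ v) h0 with heq | hl
    · exact hne (List.append_inj_left heq.symm hlen)
    · exact lex_irrefl _ (lex_trans (lex_append s u v v hlen.symm hlex) hl)
  refine ⟨?_, ?_, ?_, ?_, ?_⟩
  · rw [qshuffleL_apply]
    rw [Finset.sum_eq_single_of_mem s hsmem (fun u hu hne => by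
      rw [hzero u (Finsupp.mem_support_iff.mp hu) hne, mul_zero])]
    rw [h1, one_mul, qshuffle_self s v (hlt s hsne)]
  · intro w hw
    rw [qshuffleL_apply, Polynomial.finset_sum_coeff]
    refine Finset.sum_eq_zero fun u hu => ?_
    rw [Polynomial.mul_coeff_zero]
    rcases eq_or_ne u s with rfl | hne
    · rw [qshuffle_coeff0, if_neg hw, mul_zero]
    · rw [h2 u hne, zero_mul]
  · intro w hw
    rw [qshuffleL_apply] at hw
    obtain ⟨u, hu, hterm⟩ := Finset.exists_ne_zero_of_sum_ne_zero hw
    have hfu : f u ≠ 0 := Finsupp.mem_support_iff.mp hu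
    have hq : qshuffle u v w ≠ 0 := fun h => hterm (by rw [h, mul_zero])
    have hq' := qshuffle_lex u v (hlt u hfu) w hq
    rcases (h3 u hfu) with rfl | hlex
    · exact hq'
    · right
      have hl2 : List.Lex (· < ·) (s ++ v) (u ++ v) :=
        lex_append s u v v (h4 u hfu).symm hlex
      rcases hq' with rfl | hl3
      · exact hl2
      · exact lex_trans hl2 hl3
  · intro w hw
    rw [qshuffleL_apply] at hw
    obtain ⟨u, hu, hterm⟩ := Finset.exists_ne_zero_of_sum_ne_zero hw
    have hfu : f u ≠ 0 := Finsupp.mem_support_iff.mp hu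
    have hq : qshuffle u v w ≠ 0 := fun h => hterm (by rw [h, mul_zero])
    have hp := qshuffle_perm u v w hq
    rw [hp.length_eq, List.length_append, List.length_append, h4 u hfu]
  · intro w hw x hx
    rw [qshuffleL_apply] at hw
    obtain ⟨u, hu, hterm⟩ := Finset.exists_ne_zero_of_sum_ne_zero hw
    have hfu : f u ≠ 0 := Finsupp.mem_support_iff.mp hu
    have hq : qshuffle u v w ≠ 0 := fun h => hterm (by rw [h, mul_zero])
    have hp := qshuffle_perm u v w hq
    rcases List.mem_append.mp (hp.subset hx) with hxu | hxv
    · exact lt_of_lt_of_le (h5 u hfu x hxu) (Nat.le_add_right m k)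
    · exact (hv x hxv).2

theorem oneLine_sconcat (p q : SigmaPerm) :
    oneLine (sconcat p q).2 = oneLine p.2 ++ (oneLine q.2).map (· + p.1) := by
  have h0 : oneLine (sconcat p q).2 = List.ofFn
      (fun i : Fin (p.1 + q.1) => ((finSumFinEquiv.permCongr (p.2.sumCongr q.2)) i : ℕ)) := rfl
  rw [h0, oneLine, oneLine, List.map_ofFn, List.ofFn_add]
  congr 1
  · refine congrArg _ (funext fun i => ?_)
    simp [show ∀ h, (Fin.castLE h i : Fin (p.1 + q.1)) = Fin.castAdd q.1 i from fun _ => rfl,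
      finSumFinEquiv_symm_apply_castAdd]
  · refine congrArg _ (funext fun i => ?_)
    simp only [Function.comp_apply, Equiv.permCongr_apply, Equiv.symm_apply_apply,
      finSumFinEquiv_symm_apply_natAdd, Equiv.Perm.sumCongr_apply, Sum.map_inr,
      finSumFinEquiv_apply_right, Fin.coe_natAdd]
    omega

theorem oneLine_one : oneLine (1 : Equiv.Perm (Fin 0)) = [] := by
  simp [oneLine]

theorem Fiter_inv : ∀ (L : List SigmaPerm) (f : List ℕ →₀ Polynomial ℚ) (s : List ℕ) (m : ℕ),
    Inv f s m →
    Inv (Fiter f m L) (s ++ (oneLine (sconcatList L).2).map (· + m)) (m + (sconcatList L).1) := by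
  intro L
  induction L with
  | nil =>
    intro f s m hf
    have : sconcatList [] = (⟨0, 1⟩ : SigmaPerm) := rfl
    rw [Fiter, this]
    simpa [oneLine_one] using hf
  | cons p L ih =>
    intro f s m hf
    have hfac : sconcatList (p :: L) = sconcat p (sconcatList L) := rfl
    set v : List ℕ := (oneLine p.2).map (· + m) with hv
    have hvb : ∀ y ∈ v, m ≤ y ∧ y < m + p.1 := by
      intro y hy
      rw [hv] at hy
      obtain ⟨x, hx, rfl⟩ := List.mem_map.mp hy
      obtain ⟨i, rfl⟩ := List.mem_ofFn.mp hx
      exact ⟨Nat.le_add_left m _, by have := (p.2 i).isLt; omega⟩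
    have hstep := step hf hvb
    have := ih (qshuffleL f v) (s ++ v) (m + p.1) hstep
    rw [Fiter, hfac]
    rw [oneLine_sconcat, List.map_append, List.map_map]
    have hmap : ((· + m) ∘ (· + p.1) : ℕ → ℕ) = (· + (m + p.1)) := by
      funext x; simp only [Function.comp_apply]; omega
    rw [hmap, ← List.append_assoc]
    have hsz : (sconcat p (sconcatList L)).1 = p.1 + (sconcatList L).1 := rfl
    rw [hsz, ← Nat.add_assoc]
    exact this

theorem oneLine_inj {n : ℕ} {σ τ : Equiv.Perm (Fin n)} (h : oneLine σ = oneLine τ) : σ = τ := by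
  have := List.ofFn_injective h
  ext i
  exact congrFun this i

end Aux

/-- Let `σ = σ₁ • ⋯ • σ_r` be the maximal factorization of `σ ∈ Sₙ` into
connected permutations, and let `F^σ` be the iterated shifted `q`-shuffle
`(⋯(σ₁ ⧢_q σ₂[k₁]) ⋯) ⧢_q σ_r[k₁+⋯+k_{r-1}] = Σ_τ c_τ(q)·τ`. Then `c_σ = 1`; and for
`τ ≠ σ`, `c_τ(0) = 0`, and `c_τ = 0` unless the one-line word of `σ` is lexicographically
smaller than that of `τ`. -/
theorem qshuffle_unitriangular {n : ℕ} (σ : Equiv.Perm (Fin n)) (L : List SigmaPerm)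
    (hconn : ∀ p ∈ L, IsConnectedPerm p) (hfac : sconcatList L = ⟨n, σ⟩) :
    (Fiter (Finsupp.single [] 1) 0 L) (oneLine σ) = 1 ∧
    ∀ τ : Equiv.Perm (Fin n), τ ≠ σ →
      ((Fiter (Finsupp.single [] 1) 0 L) (oneLine τ)).coeff 0 = 0 ∧
      (¬ List.Lex (· < ·) (oneLine σ) (oneLine τ) →
        (Fiter (Finsupp.single [] 1) 0 L) (oneLine τ) = 0) := by
  have hbase : Aux.Inv (Finsupp.single [] 1) [] 0 := by
    refine ⟨Finsupp.single_eq_same, ?_, ?_, ?_, ?_⟩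
    · intro w hw
      rw [Finsupp.single_eq_of_ne' (Ne.symm hw)]
      simp
    · intro w hw
      left
      by_contra hne
      exact hw (Finsupp.single_eq_of_ne' (Ne.symm hne))
    · intro w hw
      by_contra hne
      exact hw (Finsupp.single_eq_of_ne' (fun h => hne (by rw [← h])))
    · intro w hw x hx
      by_cases h : w = []
      · subst h; cases hx
      · exact absurd (Finsupp.single_eq_of_ne' (Ne.symm h)) hw
  have hinv := Aux.Fiter_inv L (Finsupp.single [] 1) [] 0 hbase
  have hone : oneLine σ = (oneLine (sconcatList L).2).map (· + 0) := by
    rw [hfac]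
    simp
  rw [List.nil_append] at hinv
  rw [← hone] at hinv
  obtain ⟨h1, h2, h3, -, -⟩ := hinv
  refine ⟨h1, fun τ hτ => ?_⟩
  have hne : oneLine τ ≠ oneLine σ := fun h => hτ (Aux.oneLine_inj h)
  refine ⟨h2 _ hne, fun hnl => ?_⟩
  by_contra h0
  rcases h3 _ h0 with h | h
  · exact hne h
  · exact hnl h


end
end

section
/- For any two compositions I and J of n, p_I ∘ p_J = p_{I∨J} as maps Sₙ → Sₙ, where I∨J is the composition of n whose descent set is Des(I) ∪ Des(J). In particular each p_I is idempotent and the maps p_I, for I ranging over compositions of n, pairwise commute. -/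
open scoped Classical

noncomputable section

theorem sconcatList_fst (L : List SigmaPerm) :
    (sconcatList L).1 = (L.map Sigma.fst).sum := by
  induction L with
  | nil => rfl
  | cons p L ih =>
    show p.1 + (sconcatList L).1 = _
    rw [ih]; rfl

theorem pI_aux {n : ℕ} (I : Composition n) (σ : Equiv.Perm (Fin n)) :
    (sconcatList (List.ofFn (fun i : Fin I.length =>
      (⟨I.blocksFun i, std (fun j => σ (I.embedding i j))⟩ : SigmaPerm)))).1 = n := by
  rw [sconcatList_fst]
  have h2 : List.map Sigma.fst (List.ofFn (fun i : Fin I.length =>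
      (⟨I.blocksFun i, std (fun j => σ (I.embedding i j))⟩ : SigmaPerm))) =
      List.ofFn (fun i : Fin I.length => I.blocksFun i) := by
    erw [List.map_ofFn]; rfl
  have : (List.ofFn fun i : Fin I.length => I.blocksFun i).sum = n := by
    rw [List.sum_ofFn]; exact I.sum_blocksFun
  erw [h2]; exact this

/-- The operator `p_I : Sₙ → Sₙ`: cut the one-line word of `σ` into blocks of sizes given by
the composition `I`, standardize each block, and form the shifted concatenation. -/
def pI {n : ℕ} (I : Composition n) (σ : Equiv.Perm (Fin n)) : Equiv.Perm (Fin n) :=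
  (finCongr (pI_aux I σ)).permCongr
    (sconcatList (List.ofFn (fun i : Fin I.length =>
      (⟨I.blocksFun i, std (fun j => σ (I.embedding i j))⟩ : SigmaPerm)))).2

/-- The descent set of a composition `I = (i₁,…,i_m)` of `n`:
`{i₁, i₁+i₂, …, i₁+⋯+i_{m-1}}`. -/
def des {n : ℕ} (I : Composition n) : Finset ℕ :=
  (Finset.Ico 1 I.length).image I.sizeUpTo

end

noncomputable section

namespace PIProof

lemma perm_eq_one_of_strictMono {n : ℕ} (π : Equiv.Perm (Fin n)) (h : StrictMono π) : π = 1 := by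
  have h2 : ⇑π = id := by
    apply (StrictMono.range_inj h (strictMono_id (α := Fin n))).1
    simp [π.surjective.range_eq]
  exact Equiv.ext fun i => by simp [congrFun h2 i]

lemma isStd_std {A : Type*} [LinearOrder A] {n : ℕ} (w : Fin n → A) : IsStd w (std w) :=
  Classical.choose_spec (exists_isStd w)

lemma sconcat_apply_castAdd (p q : SigmaPerm) (j : Fin p.1) :
    ((sconcat p q).2 (Fin.castAdd q.1 j) : ℕ) = (p.2 j : ℕ) := by
  show ((finSumFinEquiv (Sum.map p.2 q.2 (finSumFinEquiv.symm (Fin.castAdd q.1 j)))) : ℕ) = _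
  simp

lemma sconcat_apply_natAdd (p q : SigmaPerm) (j : Fin q.1) :
    ((sconcat p q).2 (Fin.natAdd p.1 j) : ℕ) = p.1 + (q.2 j : ℕ) := by
  show ((finSumFinEquiv (Sum.map p.2 q.2 (finSumFinEquiv.symm (Fin.natAdd p.1 j)))) : ℕ) = _
  simp
lemma sconcatList_apply (L : List SigmaPerm) (k : ℕ) (hk : k < L.length)
    (j : ℕ) (hj : j < (L.get ⟨k, hk⟩).1) (x : Fin (sconcatList L).1)
    (hx : (x : ℕ) = ((L.take k).map Sigma.fst).sum + j) :
    ((sconcatList L).2 x : ℕ) = ((L.take k).map Sigma.fst).sum + ((L.get ⟨k, hk⟩).2 ⟨j, hj⟩ : ℕ) := by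
  induction L generalizing k with
  | nil => exact absurd hk (by simp)
  | cons p L ih =>
    cases k with
    | zero =>
      have hx0 : (x : ℕ) = j := hx.trans (Nat.zero_add j)
      have hx' : x = Fin.castAdd (sconcatList L).1 ⟨j, hj⟩ := Fin.ext (by simpa using hx0)
      rw [hx']
      have := sconcat_apply_castAdd p (sconcatList L) ⟨j, hj⟩
      exact this.trans (Nat.zero_add _).symm
    | succ k =>
      have hk' : k < L.length := by simpa using hk
      have hj' : j < (L.get ⟨k, hk'⟩).1 := hj
      have hxlt : (x : ℕ) < p.1 + (sconcatList L).1 := x.isLt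
      have hsum : ((((p :: L).take (k+1)).map Sigma.fst).sum : ℕ)
          = p.1 + ((L.take k).map Sigma.fst).sum := by simp; rfl
      have hyx : p.1 ≤ (x : ℕ) := by rw [hx, hsum]; omega
      set y : Fin (sconcatList L).1 := ⟨(x : ℕ) - p.1, by omega⟩ with hy
      have hx' : x = Fin.natAdd p.1 y := by
        apply Fin.ext
        rw [Fin.coe_natAdd]
        show (x : ℕ) = p.1 + ((x : ℕ) - p.1)
        omega
      have hyv : (y : ℕ) = ((L.take k).map Sigma.fst).sum + j := by
        show (x : ℕ) - p.1 = ((L.take k).map Sigma.fst).sum + j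
        rw [hx, hsum]; omega
      have hco : (((p :: L).get ⟨k+1, hk⟩).2 ⟨j, hj⟩ : ℕ) = ((L.get ⟨k, hk'⟩).2 ⟨j, hj'⟩ : ℕ) := rfl
      rw [hx']
      have h1 := sconcat_apply_natAdd p (sconcatList L) y
      have h2 := ih k hk' hj' y hyv
      rw [hsum]
      calc ((sconcatList (p :: L)).2 (Fin.natAdd p.1 y) : ℕ)
          = p.1 + ((sconcatList L).2 y : ℕ) := h1
        _ = p.1 + (((L.take k).map Sigma.fst).sum + ((L.get ⟨k, hk'⟩).2 ⟨j, hj'⟩ : ℕ)) := by rw [h2]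
        _ = _ := by rw [hco]; omega

lemma sigma_snd_coe {p q : SigmaPerm} (h : p = q) (j : ℕ) (hj : j < p.1) (hj' : j < q.1) :
    (p.2 ⟨j, hj⟩ : ℕ) = (q.2 ⟨j, hj'⟩ : ℕ) := by subst h; rfl
lemma pI_apply' {n : ℕ} (I : Composition n) (σ : Equiv.Perm (Fin n)) (k : Fin I.length)
    (a : Fin (I.blocksFun k)) :
    ((pI I σ) (I.embedding k a) : ℕ)
      = I.sizeUpTo k + (std (fun j => σ (I.embedding k j)) a : ℕ) := by
  set f : Fin I.length → SigmaPerm :=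
    fun i => (⟨I.blocksFun i, std (fun j => σ (I.embedding i j))⟩ : SigmaPerm) with hf
  set L : List SigmaPerm := List.ofFn f with hL
  have hlen : L.length = I.length := by simp [hL]
  have hmap : L.map Sigma.fst = I.blocks := by
    erw [hL, List.map_ofFn]
    exact I.ofFn_blocksFun
  have hoff : ∀ m : ℕ, ((L.take m).map Sigma.fst).sum = I.sizeUpTo m := by
    intro m
    erw [List.map_take, hmap]
    rfl
  have hk : (k : ℕ) < L.length := by rw [hlen]; exact k.isLt
  have hget : L.get ⟨(k : ℕ), hk⟩ = f k := by
    show (List.ofFn f).get ⟨(k : ℕ), hk⟩ = f k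
    rw [List.get_ofFn]
    exact congrArg f (Fin.ext rfl)
  have hj : (a : ℕ) < (L.get ⟨(k : ℕ), hk⟩).1 := by rw [hget]; exact a.isLt
  show ((finCongr (pI_aux I σ)).permCongr (sconcatList L).2 (I.embedding k a) : ℕ) = _
  rw [Equiv.permCongr_apply]
  simp only [finCongr_apply, Fin.coe_cast]
  rw [sconcatList_apply L k hk a hj _ (by simp only [finCongr_symm, finCongr_apply, Fin.coe_cast, Composition.coe_embedding, hoff]), hoff]
  congr 1
  rw [sigma_snd_coe hget a hj (by exact a.isLt)]

-- index lemmas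
lemma index_lt_of_lt_sizeUpTo {n : ℕ} (c : Composition n) {i : Fin n} {m : ℕ}
    (h : (i : ℕ) < c.sizeUpTo m) : (c.index i : ℕ) < m := by
  by_contra hm
  push_neg at hm
  exact absurd (le_trans (c.monotone_sizeUpTo hm) (c.sizeUpTo_index_le i)) (not_le.2 h)

lemma le_index_of_sizeUpTo_le {n : ℕ} (c : Composition n) {j : Fin n} {m : ℕ}
    (h : c.sizeUpTo m ≤ (j : ℕ)) : m ≤ (c.index j : ℕ) := by
  by_contra hm
  push_neg at hm
  have h1 : (j : ℕ) < c.sizeUpTo ((c.index j : ℕ) + 1) := c.lt_sizeUpTo_index_succ j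
  have h2 : c.sizeUpTo ((c.index j : ℕ) + 1) ≤ c.sizeUpTo m := c.monotone_sizeUpTo hm
  omega

lemma lt_of_index_lt {n : ℕ} (c : Composition n) {i j : Fin n}
    (h : c.index i < c.index j) : i < j := by
  have h1 : (i : ℕ) < c.sizeUpTo ((c.index i : ℕ) + 1) := c.lt_sizeUpTo_index_succ i
  have h2 : c.sizeUpTo ((c.index i : ℕ) + 1) ≤ c.sizeUpTo (c.index j) := c.monotone_sizeUpTo h
  have h3 := c.sizeUpTo_index_le j
  exact Fin.lt_def.2 (by omega)

lemma index_mono {n : ℕ} (c : Composition n) {i j : Fin n} (h : i ≤ j) :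
    c.index i ≤ c.index j := by
  by_contra hm
  push_neg at hm
  exact absurd (lt_of_index_lt c hm) (not_lt.2 h)

lemma mem_des {n : ℕ} (I : Composition n) {c : ℕ} :
    c ∈ des I ↔ ∃ m, 1 ≤ m ∧ m < I.length ∧ I.sizeUpTo m = c := by
  simp only [des, Finset.mem_image, Finset.mem_Ico]
  tauto

lemma index_lt_of_des {n : ℕ} (K : Composition n) {i j : Fin n} {c : ℕ}
    (hc : c ∈ des K) (h1 : (i : ℕ) < c) (h2 : c ≤ (j : ℕ)) : K.index i < K.index j := by
  obtain ⟨m, _, _, rfl⟩ := (mem_des K).1 hc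
  have ha := index_lt_of_lt_sizeUpTo K h1
  have hb := le_index_of_sizeUpTo_le K h2
  exact Fin.lt_def.2 (by omega)

lemma exists_des_between {n : ℕ} (I : Composition n) {i j : Fin n}
    (h : I.index i < I.index j) : ∃ c ∈ des I, (i : ℕ) < c ∧ c ≤ (j : ℕ) := by
  have hle : (I.index i : ℕ) + 1 ≤ (I.index j : ℕ) := h
  refine ⟨I.sizeUpTo ((I.index i : ℕ) + 1), (mem_des I).2 ⟨(I.index i : ℕ) + 1, by omega,
    by have := (I.index j).isLt; omega, rfl⟩, I.lt_sizeUpTo_index_succ i, ?_⟩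
  exact le_trans (I.monotone_sizeUpTo hle) (I.sizeUpTo_index_le j)

lemma index_eq_of_subset {n : ℕ} {I K : Composition n} (hIK : des I ⊆ des K)
    {i j : Fin n} (hij : K.index i = K.index j) : I.index i = I.index j := by
  rcases lt_trichotomy (I.index i) (I.index j) with h | h | h
  · obtain ⟨c, hc, h1, h2⟩ := exists_des_between I h
    exact absurd (index_lt_of_des K (hIK hc) h1 h2) (by rw [hij]; exact lt_irrefl _)
  · exact h
  · obtain ⟨c, hc, h1, h2⟩ := exists_des_between I h
    exact absurd (index_lt_of_des K (hIK hc) h1 h2) (by rw [hij]; exact lt_irrefl _)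

-- pI lemmas
lemma pI_eq_emb {n : ℕ} (I : Composition n) (σ : Equiv.Perm (Fin n)) (k : Fin I.length)
    (a : Fin (I.blocksFun k)) :
    pI I σ (I.embedding k a) = I.embedding k (std (fun j => σ (I.embedding k j)) a) :=
  Fin.ext (by rw [pI_apply', Composition.coe_embedding])

lemma index_pI {n : ℕ} (I : Composition n) (σ : Equiv.Perm (Fin n)) (i : Fin n) :
    I.index (pI I σ i) = I.index i := by
  conv_lhs => rw [← I.embedding_comp_inv i, pI_eq_emb, Composition.index_embedding]

lemma pI_emb_lt {n : ℕ} (I : Composition n) (σ : Equiv.Perm (Fin n)) (k : Fin I.length)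
    (a b : Fin (I.blocksFun k)) :
    pI I σ (I.embedding k a) < pI I σ (I.embedding k b)
      ↔ σ (I.embedding k a) < σ (I.embedding k b) := by
  set w : Fin (I.blocksFun k) → Fin n := fun j => σ (I.embedding k j) with hw
  have key : ∀ a b : Fin (I.blocksFun k), a < b →
      (pI I σ (I.embedding k a) < pI I σ (I.embedding k b) ↔ w a < w b) := by
    intro a b hab
    have h1 := isStd_std w a b hab
    have hne : w a ≠ w b := fun e => absurd ((I.embedding k).injective (σ.injective e)) (ne_of_lt hab)
    have hle : w a ≤ w b ↔ w a < w b := ⟨fun h => lt_of_le_of_ne h hne, le_of_lt⟩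
    rw [hle] at h1
    rw [← h1]
    constructor
    · intro h
      have ha := pI_apply' I σ k a
      have hb := pI_apply' I σ k b
      rw [← hw] at ha hb
      have := Fin.lt_def.1 h
      rw [ha, hb] at this
      exact Fin.lt_def.2 (by omega)
    · intro h
      have ha := pI_apply' I σ k a
      have hb := pI_apply' I σ k b
      rw [← hw] at ha hb
      have := Fin.lt_def.1 h
      exact Fin.lt_def.2 (by rw [ha, hb]; omega)
  rcases lt_trichotomy a b with h | h | h
  · exact key a b h
  · subst h; simp
  · have h2 := key b a h
    have e1 : pI I σ (I.embedding k a) ≠ pI I σ (I.embedding k b) :=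
      fun e => absurd ((I.embedding k).injective ((pI I σ).injective e)) (ne_of_gt h)
    have e2 : w a ≠ w b :=
      fun e => absurd ((I.embedding k).injective (σ.injective e)) (ne_of_gt h)
    constructor
    · intro hlt
      rcases lt_trichotomy (w a) (w b) with hc | hc | hc
      · exact hc
      · exact absurd hc e2
      · exact absurd (h2.2 hc) (not_lt.2 hlt.le)
    · intro hlt
      rcases lt_trichotomy (pI I σ (I.embedding k a)) (pI I σ (I.embedding k b)) with hc | hc | hc
      · exact hc
      · exact absurd hc e1
      · exact absurd (h2.1 hc) (not_lt.2 hlt.le)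

lemma pI_lt_iff {n : ℕ} (I : Composition n) (σ : Equiv.Perm (Fin n)) {i j : Fin n}
    (hij : I.index i = I.index j) : pI I σ i < pI I σ j ↔ σ i < σ j := by
  have hb' : ((I.invEmbedding j : ℕ)) < I.blocksFun (I.index i) := by
    rw [hij]; exact (I.invEmbedding j).isLt
  have hjemb : I.embedding (I.index i) ⟨(I.invEmbedding j : ℕ), hb'⟩ = j := by
    apply Fin.ext
    rw [Composition.coe_embedding, Composition.coe_invEmbedding]
    have h1 := I.sizeUpTo_index_le j
    have h2 : I.sizeUpTo (I.index i : ℕ) = I.sizeUpTo (I.index j : ℕ) := by rw [hij]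
    omega
  have hiemb : I.embedding (I.index i) (I.invEmbedding i) = i := I.embedding_comp_inv i
  rw [← hiemb, ← hjemb]
  exact pI_emb_lt I σ (I.index i) _ _
lemma pI_lt_of_index_lt {n : ℕ} (I : Composition n) (σ : Equiv.Perm (Fin n)) {i j : Fin n}
    (h : I.index i < I.index j) : pI I σ i < pI I σ j :=
  lt_of_index_lt I (by rw [index_pI, index_pI]; exact h)

lemma pI_comp {n : ℕ} (I J K : Composition n) (hK : des K = des I ∪ des J) :
    pI I ∘ pI J = pI K := by
  have hIK : des I ⊆ des K := by rw [hK]; exact Finset.subset_union_left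
  have hJK : des J ⊆ des K := by rw [hK]; exact Finset.subset_union_right
  funext σ
  set τ := pI J σ with hτ
  set κ := pI K σ with hκ
  have hmono : StrictMono (κ.symm.trans (pI I τ)) := by
    intro a b hab
    simp only [Equiv.trans_apply]
    set i := κ.symm a with hi
    set j := κ.symm b with hj
    have hk : κ i < κ j := by
      rw [hi, hj, Equiv.apply_symm_apply, Equiv.apply_symm_apply]; exact hab
    by_cases hKij : K.index i = K.index j
    · have hσ : σ i < σ j := (pI_lt_iff K σ hKij).1 hk
      have hJij : J.index i = J.index j := index_eq_of_subset hJK hKij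
      have hIij : I.index i = I.index j := index_eq_of_subset hIK hKij
      exact (pI_lt_iff I τ hIij).2 ((pI_lt_iff J σ hJij).2 hσ)
    · have h1 : K.index i ≤ K.index j := by
        have := index_mono K (le_of_lt hk)
        rwa [hκ, index_pI, index_pI] at this
      have hKlt : K.index i < K.index j := lt_of_le_of_ne h1 hKij
      have hij : i < j := lt_of_index_lt K hKlt
      by_cases hIij : I.index i = I.index j
      · obtain ⟨c, hc, hic, hcj⟩ := exists_des_between K hKlt
        rw [hK] at hc
        rcases Finset.mem_union.1 hc with hcI | hcJ
        · exact absurd (index_lt_of_des I hcI hic hcj) (by rw [hIij]; exact lt_irrefl _)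
        · have hJlt : J.index i < J.index j := index_lt_of_des J hcJ hic hcj
          exact (pI_lt_iff I τ hIij).2 (pI_lt_of_index_lt J σ hJlt)
      · have hIlt : I.index i < I.index j :=
          lt_of_le_of_ne (index_mono I hij.le) hIij
        exact pI_lt_of_index_lt I τ hIlt
  have hone := perm_eq_one_of_strictMono _ hmono
  show pI I (pI J σ) = pI K σ
  apply Equiv.ext
  intro i
  have h1 : (κ.symm.trans (pI I τ)) (κ i) = (1 : Equiv.Perm (Fin n)) (κ i) := by rw [hone]
  simpa using h1

end PIProof

/-- For compositions `I, J` of `n`, `p_I ∘ p_J = p_{I∨J}`, where `I∨J` is the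
composition whose descent set is `Des(I) ∪ Des(J)`. In particular each `p_I` is idempotent and
the maps `p_I` pairwise commute. -/
theorem pI_comp_pI {n : ℕ} (I J K : Composition n) (hK : des K = des I ∪ des J) :
    (pI I ∘ pI J = pI K) ∧ (pI I ∘ pI I = pI I) ∧ (pI I ∘ pI J = pI J ∘ pI I) := by
  refine ⟨PIProof.pI_comp I J K hK, PIProof.pI_comp I I I (by simp), ?_⟩
  rw [PIProof.pI_comp I J K hK, PIProof.pI_comp J I K (by rw [hK, Finset.union_comm])]

end
end

section
/- Let u and v be words over a linearly ordered alphabet Ω and let I be an interval of Ω. If u ≡ v for the plactic congruence, then u|_I ≡ v|_I, where w|_I denotes the subword of w consisting of those letters that belong to I. -/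
open scoped Classical

/-- The elementary Knuth relations: `xzy ≡ zxy` for `x ≤ y < z`, and
`yxz ≡ yzx` for `x < y ≤ z`. -/
inductive KnuthRel {Ω : Type*} [LinearOrder Ω] : List Ω → List Ω → Prop
  | knuth1 (x y z : Ω) : x ≤ y → y < z → KnuthRel [x, z, y] [z, x, y]
  | knuth2 (x y z : Ω) : x < y → y ≤ z → KnuthRel [y, x, z] [y, z, x]

/-- One elementary plactic rewriting step: a Knuth relation applied inside a word. -/
def PlacticStep {Ω : Type*} [LinearOrder Ω] (u v : List Ω) : Prop :=
  ∃ (l r a b : List Ω), KnuthRel a b ∧ u = l ++ a ++ r ∧ v = l ++ b ++ r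

/-- The plactic congruence: the congruence on the free monoid generated by the Knuth
relations (i.e. the equivalence relation generated by elementary plactic steps, which is
automatically compatible with concatenation). -/
def Plactic {Ω : Type*} [LinearOrder Ω] : List Ω → List Ω → Prop :=
  Relation.EqvGen PlacticStep

lemma plactic_context {Ω : Type*} [LinearOrder Ω] (l r : List Ω) {a b : List Ω}
    (h : Plactic a b) : Plactic (l ++ a ++ r) (l ++ b ++ r) := by
  induction h with
  | rel x y hxy =>
    obtain ⟨l', r', a', b', hk, hx, hy⟩ := hxy
    exact Relation.EqvGen.rel _ _ ⟨l ++ l', r' ++ r, a', b', hk, by simp [hx], by simp [hy]⟩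
  | refl x => exact Relation.EqvGen.refl _
  | symm x y _ ih => exact Relation.EqvGen.symm _ _ ih
  | trans x y z _ _ ih1 ih2 => exact Relation.EqvGen.trans _ _ _ ih1 ih2

lemma plactic_of_knuth {Ω : Type*} [LinearOrder Ω] {a b : List Ω} (h : KnuthRel a b) :
    Plactic a b :=
  Relation.EqvGen.rel _ _ ⟨[], [], a, b, h, by simp, by simp⟩

lemma knuth_filter {Ω : Type*} [LinearOrder Ω] (I : Set Ω)
    (hI : ∀ a b c : Ω, a ≤ b → b ≤ c → a ∈ I → c ∈ I → b ∈ I)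
    {a b : List Ω} (h : KnuthRel a b) :
    Plactic (a.filter fun x => decide (x ∈ I)) (b.filter fun x => decide (x ∈ I)) := by
  cases h with
  | knuth1 x y z hxy hyz =>
    by_cases hx : x ∈ I <;> by_cases hz : z ∈ I
    · have hy : y ∈ I := hI x y z hxy hyz.le hx hz
      simp [List.filter, hx, hy, hz]
      exact plactic_of_knuth (KnuthRel.knuth1 x y z hxy hyz)
    all_goals by_cases hy : y ∈ I <;>
      simp [List.filter, hx, hy, hz] <;>
      exact Relation.EqvGen.refl _
  | knuth2 x y z hxy hyz =>
    by_cases hx : x ∈ I <;> by_cases hz : z ∈ I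
    · have hy : y ∈ I := hI x y z hxy.le hyz hx hz
      simp [List.filter, hx, hy, hz]
      exact plactic_of_knuth (KnuthRel.knuth2 x y z hxy hyz)
    all_goals by_cases hy : y ∈ I <;>
      simp [List.filter, hx, hy, hz] <;>
      exact Relation.EqvGen.refl _

/-- The plactic congruence is compatible with restriction to intervals:
if `u ≡ v` then `u|_I ≡ v|_I` for any interval `I` of the alphabet. -/
theorem plactic_restrict {Ω : Type*} [LinearOrder Ω] (I : Set Ω)
    (hI : ∀ a b c : Ω, a ≤ b → b ≤ c → a ∈ I → c ∈ I → b ∈ I)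
    (u v : List Ω) (h : Plactic u v) :
    Plactic (u.filter fun x => decide (x ∈ I)) (v.filter fun x => decide (x ∈ I)) := by
  induction h with
  | rel x y hxy =>
    obtain ⟨l, r, a, b, hk, hx, hy⟩ := hxy
    subst hx hy
    simp only [List.filter_append]
    exact plactic_context _ _ (knuth_filter I hI hk)
  | refl x => exact Relation.EqvGen.refl _
  | symm x y _ ih => exact Relation.EqvGen.symm _ _ ih
  | trans x y z _ _ ih1 ih2 => exact Relation.EqvGen.trans _ _ _ ih1 ih2
end

section
/- Let P = P₁ ∧ P₂ and P' = P'₁ ∧ P'₂, where P₁, P₂, P'₁, P'₂ are partial orders on {1,…,a}, {1,…,b}, {1,…,a'}, {1,…,b'} respectively, so that P is a partial order on {1,…,n} with n = a+b+1 and P' is a partial order on {1,…,m} with m = a'+b'+1. Then L(P ⊔ P') = L(P₁ ∧ (P₂ ⊔ P')) ⊔ L((P ⊔ P'₁) ∧ P'₂), a disjoint union of subsets of S_{n+m}. (Applied to the posets associated with planar binary trees, this is the product rule of the Loday–Ronco Hopf algebra of binary trees realized inside FQSym.) -/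
/-- `IsPosetOn n r` : `r` is (the strict order of) a partial order on `{0,…,n−1}`. -/
def IsPosetOn (n : ℕ) (r : ℕ → ℕ → Prop) : Prop :=
  (∀ i j, r i j → i < n ∧ j < n) ∧ (∀ i, ¬ r i i) ∧
    (∀ i j k, r i j → r j k → r i k)

/-- The set `L(P)` of linear extensions of a partial order `r` on `{0,…,n−1}`:
permutations `σ` such that `r i j` implies that `i` occurs before `j` in the one-line
word of `σ`. -/
def LinExt (n : ℕ) (r : ℕ → ℕ → Prop) : Set (Equiv.Perm (Fin n)) :=
  {σ | ∀ i j : Fin n, r (i : ℕ) (j : ℕ) → σ⁻¹ i < σ⁻¹ j}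

/-- Concatenation `P₁ ⊔ P₂` of a poset on `{0,…,k−1}` and a poset (shifted by `k`). -/
def sqcupRel (k : ℕ) (r₁ r₂ : ℕ → ℕ → Prop) : ℕ → ℕ → Prop :=
  fun i j => (i < k ∧ j < k ∧ r₁ i j) ∨ (k ≤ i ∧ k ≤ j ∧ r₂ (i - k) (j - k))

/-- The poset `P₁ ∧ P₂` on `{0,…,k+l}`: the juxtaposition of `P₁` (on `{0,…,k−1}`) and
`P₂` (shifted to `{k+1,…,k+l}`), with the element `k` adjoined as greatest element. -/
def wedgeRel (k l : ℕ) (r₁ r₂ : ℕ → ℕ → Prop) : ℕ → ℕ → Prop :=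
  fun i j => (i < k ∧ j < k ∧ r₁ i j) ∨
    (k + 1 ≤ i ∧ k + 1 ≤ j ∧ r₂ (i - (k + 1)) (j - (k + 1))) ∨
    (j = k ∧ i ≠ k ∧ i < k + l + 1)

/-- `IsShuffle u v w` : `w` is a shuffle of the words `u` and `v`. -/
inductive IsShuffle {α : Type*} : List α → List α → List α → Prop
  | nil : IsShuffle [] [] []
  | left (a : α) (u v w : List α) : IsShuffle u v w → IsShuffle (a :: u) v (a :: w)
  | right (a : α) (u v w : List α) : IsShuffle u v w → IsShuffle u (a :: v) (a :: w)

lemma splitA (a b l : ℕ) (r₁ r₂ Q : ℕ → ℕ → Prop) (i j : ℕ)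
    (h : wedgeRel a (b + l) r₁ (sqcupRel b r₂ Q) i j) :
    sqcupRel (a + b + 1) (wedgeRel a b r₁ r₂) Q i j ∨
      (j = a ∧ a + b + 1 ≤ i ∧ i < a + b + 1 + l) := by
  unfold wedgeRel sqcupRel at h ⊢
  rcases h with ⟨hi, hj, h⟩ | ⟨hi, hj, ⟨hi2, hj2, h⟩ | ⟨hi2, hj2, h⟩⟩ | ⟨hj, hi, hlt⟩
  · exact Or.inl (Or.inl ⟨by omega, by omega, Or.inl ⟨hi, hj, h⟩⟩)
  · exact Or.inl (Or.inl ⟨by omega, by omega, Or.inr (Or.inl ⟨by omega, by omega, h⟩)⟩)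
  · refine Or.inl (Or.inr ⟨by omega, by omega, ?_⟩)
    rw [show i - (a+b+1) = i - (a+1) - b by omega, show j - (a+b+1) = j - (a+1) - b by omega]
    exact h
  · by_cases hc : i < a + b + 1
    · exact Or.inl (Or.inl ⟨hc, by omega, Or.inr (Or.inr ⟨hj, hi, by omega⟩)⟩)
    · exact Or.inr ⟨hj, by omega, by omega⟩

lemma supA (a b l : ℕ) (r₁ r₂ Q : ℕ → ℕ → Prop) (i j : ℕ)
    (h : sqcupRel (a + b + 1) (wedgeRel a b r₁ r₂) Q i j) :
    wedgeRel a (b + l) r₁ (sqcupRel b r₂ Q) i j := by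
  unfold wedgeRel sqcupRel at h ⊢
  rcases h with ⟨hi, hj, ⟨hi1, hj1, h⟩ | ⟨hi1, hj1, h⟩ | ⟨hj1, hi1, hlt⟩⟩ | ⟨hi, hj, h⟩
  · exact Or.inl ⟨hi1, hj1, h⟩
  · exact Or.inr (Or.inl ⟨hi1, hj1, Or.inl ⟨by omega, by omega, h⟩⟩)
  · exact Or.inr (Or.inr ⟨hj1, hi1, by omega⟩)
  · refine Or.inr (Or.inl ⟨by omega, by omega, Or.inr ⟨by omega, by omega, ?_⟩⟩)
    rw [show i - (a+1) - b = i - (a+b+1) by omega, show j - (a+1) - b = j - (a+b+1) by omega]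
    exact h

lemma splitB (n a' b' : ℕ) (W r₁' r₂' : ℕ → ℕ → Prop) (i j : ℕ)
    (h : wedgeRel (n + a') b' (sqcupRel n W r₁') r₂' i j) :
    sqcupRel n W (wedgeRel a' b' r₁' r₂') i j ∨ (j = n + a' ∧ i < n) := by
  unfold wedgeRel sqcupRel at h ⊢
  rcases h with ⟨hi, hj, ⟨hi1, hj1, h⟩ | ⟨hi1, hj1, h⟩⟩ | ⟨hi, hj, h⟩ | ⟨hj, hi, hlt⟩
  · exact Or.inl (Or.inl ⟨hi1, hj1, h⟩)
  · exact Or.inl (Or.inr ⟨hi1, hj1, Or.inl ⟨by omega, by omega, h⟩⟩)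
  · refine Or.inl (Or.inr ⟨by omega, by omega, Or.inr (Or.inl ⟨by omega, by omega, ?_⟩)⟩)
    rw [show i - n - (a'+1) = i - (n+a'+1) by omega, show j - n - (a'+1) = j - (n+a'+1) by omega]
    exact h
  · by_cases hc : n ≤ i
    · exact Or.inl (Or.inr ⟨hc, by omega, Or.inr (Or.inr ⟨by omega, by omega, by omega⟩)⟩)
    · exact Or.inr ⟨hj, by omega⟩

lemma supB (n a' b' : ℕ) (W r₁' r₂' : ℕ → ℕ → Prop) (i j : ℕ)
    (h : sqcupRel n W (wedgeRel a' b' r₁' r₂') i j) :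
    wedgeRel (n + a') b' (sqcupRel n W r₁') r₂' i j := by
  unfold wedgeRel sqcupRel at h ⊢
  rcases h with ⟨hi, hj, h⟩ | ⟨hi, hj, ⟨hi1, hj1, h⟩ | ⟨hi1, hj1, h⟩ | ⟨hj1, hi1, hlt⟩⟩
  · exact Or.inl ⟨by omega, by omega, Or.inl ⟨hi, hj, h⟩⟩
  · exact Or.inl ⟨by omega, by omega, Or.inr ⟨hi, hj, h⟩⟩
  · refine Or.inr (Or.inl ⟨by omega, by omega, ?_⟩)
    rw [show i - (n+a'+1) = i - n - (a'+1) by omega, show j - (n+a'+1) = j - n - (a'+1) by omega]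
    exact h
  · exact Or.inr (Or.inr ⟨by omega, by omega, by omega⟩)

/-- product rule of the Loday–Ronco algebra inside `FQSym`.
For `P = P₁ ∧ P₂` and `P' = P'₁ ∧ P'₂`,
`L(P ⊔ P') = L(P₁ ∧ (P₂ ⊔ P')) ⊔ L((P ⊔ P'₁) ∧ P'₂)` (a disjoint union). -/
theorem linExt_sqcup_wedge {a b a' b' : ℕ}
    (r₁ r₂ r₁' r₂' : ℕ → ℕ → Prop)
    (h₁ : IsPosetOn a r₁) (h₂ : IsPosetOn b r₂)
    (h₁' : IsPosetOn a' r₁') (h₂' : IsPosetOn b' r₂') :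
    LinExt (a + b + 1 + (a' + b' + 1))
        (sqcupRel (a + b + 1) (wedgeRel a b r₁ r₂) (wedgeRel a' b' r₁' r₂')) =
      LinExt (a + b + 1 + (a' + b' + 1))
          (wedgeRel a (b + (a' + b' + 1)) r₁
            (sqcupRel b r₂ (wedgeRel a' b' r₁' r₂'))) ∪
        LinExt (a + b + 1 + (a' + b' + 1))
          (wedgeRel (a + b + 1 + a') b'
            (sqcupRel (a + b + 1) (wedgeRel a b r₁ r₂) r₁') r₂') ∧
    LinExt (a + b + 1 + (a' + b' + 1))
          (wedgeRel a (b + (a' + b' + 1)) r₁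
            (sqcupRel b r₂ (wedgeRel a' b' r₁' r₂'))) ∩
        LinExt (a + b + 1 + (a' + b' + 1))
          (wedgeRel (a + b + 1 + a') b'
            (sqcupRel (a + b + 1) (wedgeRel a b r₁ r₂) r₁') r₂') = ∅ := by
  have hx : a < a + b + 1 + (a' + b' + 1) := by omega
  have hy : a + b + 1 + a' < a + b + 1 + (a' + b' + 1) := by omega
  refine ⟨?_, ?_⟩
  · ext σ
    simp only [LinExt, Set.mem_union, Set.mem_setOf_eq]
    constructor
    · intro hR
      by_cases hc : σ⁻¹ ⟨a + b + 1 + a', hy⟩ < σ⁻¹ ⟨a, hx⟩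
      · left
        intro i j hij
        rcases splitA a b (a' + b' + 1) r₁ r₂ _ i j hij with hr | ⟨hj, hi, hlt⟩
        · exact hR i j hr
        · have hj' : j = ⟨a, hx⟩ := Fin.ext hj
          by_cases he : (i : ℕ) = a + b + 1 + a'
          · have hi' : i = ⟨a + b + 1 + a', hy⟩ := Fin.ext he
            rw [hi', hj']; exact hc
          · have h1 : σ⁻¹ i < σ⁻¹ ⟨a + b + 1 + a', hy⟩ := by
              refine hR i ⟨a + b + 1 + a', hy⟩
                (show sqcupRel (a + b + 1) (wedgeRel a b r₁ r₂)
                    (wedgeRel a' b' r₁' r₂') (i : ℕ) (a + b + 1 + a') from ?_)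
              exact Or.inr ⟨by omega, by omega,
                Or.inr (Or.inr ⟨by omega, by omega, by omega⟩)⟩
            rw [hj']; exact lt_trans h1 hc
      · have hne : σ⁻¹ (⟨a, hx⟩ : Fin (a + b + 1 + (a' + b' + 1))) ≠
            σ⁻¹ ⟨a + b + 1 + a', hy⟩ := by
          intro h
          have h2 := (σ⁻¹ : Equiv.Perm _).injective h
          rw [Fin.mk.injEq] at h2
          omega
        have hc' : σ⁻¹ (⟨a, hx⟩ : Fin (a + b + 1 + (a' + b' + 1))) <
            σ⁻¹ ⟨a + b + 1 + a', hy⟩ := lt_of_le_of_ne (not_lt.mp hc) hne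
        right
        intro i j hij
        rcases splitB (a + b + 1) a' b' _ r₁' r₂' i j hij with hr | ⟨hj, hi⟩
        · exact hR i j hr
        · have hj' : j = ⟨a + b + 1 + a', hy⟩ := Fin.ext hj
          by_cases he : (i : ℕ) = a
          · have hi' : i = ⟨a, hx⟩ := Fin.ext he
            rw [hi', hj']; exact hc'
          · have h1 : σ⁻¹ i < σ⁻¹ ⟨a, hx⟩ := by
              refine hR i ⟨a, hx⟩
                (show sqcupRel (a + b + 1) (wedgeRel a b r₁ r₂)
                    (wedgeRel a' b' r₁' r₂') (i : ℕ) a from ?_)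
              exact Or.inl ⟨by omega, by omega,
                Or.inr (Or.inr ⟨rfl, he, by omega⟩)⟩
            rw [hj']; exact lt_trans h1 hc'
    · rintro (hA | hB) i j hij
      · exact hA i j (supA a b (a' + b' + 1) r₁ r₂ _ _ _ hij)
      · exact hB i j (supB (a + b + 1) a' b' _ r₁' r₂' _ _ hij)
  · apply Set.eq_empty_iff_forall_notMem.mpr
    rintro σ ⟨hA, hB⟩
    simp only [LinExt, Set.mem_setOf_eq] at hA hB
    have h1 := hA ⟨a + b + 1 + a', hy⟩ ⟨a, hx⟩
      (show wedgeRel a (b + (a' + b' + 1)) r₁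
          (sqcupRel b r₂ (wedgeRel a' b' r₁' r₂')) (a + b + 1 + a') a from
        Or.inr (Or.inr ⟨rfl, by omega, by omega⟩))
    have h2 := hB ⟨a, hx⟩ ⟨a + b + 1 + a', hy⟩
      (show wedgeRel (a + b + 1 + a') b'
          (sqcupRel (a + b + 1) (wedgeRel a b r₁ r₂) r₁') r₂' a (a + b + 1 + a') from
        Or.inr (Or.inr ⟨rfl, by omega, by omega⟩))
    exact absurd h2 (lt_asymm h1)
end

section
/- Let N ≥ 1 and let P and Q be packed matrices. Then in the tensor algebra ℚ{X} one has MS_P · MS_Q = Σ_{R ∈ ⧢(P,Q)} MS_R. In particular, the ℚ-linear span of the elements MS_M, over packed matrices M, is a subalgebra of ℚ{X} (the algebra MQSym of matrix quasi-symmetric functions). -/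
open scoped Classical

noncomputable section

/-- A packed matrix: a matrix of nonnegative integers with no zero row and no zero column. -/
structure PackedMatrix where
  p : ℕ
  q : ℕ
  entry : Fin p → Fin q → ℕ
  rows_nonzero : ∀ i, ∃ j, entry i j ≠ 0
  cols_nonzero : ∀ j, ∃ i, entry i j ≠ 0

/-- The ideal `ℚ[X]⁺` of polynomials with zero constant term, as a `ℚ`-submodule of
`ℚ[x₁,…,x_N]`. -/
def PolyPlus (N : ℕ) : Submodule ℚ (MvPolynomial (Fin N) ℚ) :=
  (RingHom.ker (MvPolynomial.constantCoeff (R := ℚ) (σ := Fin N))).restrictScalars ℚ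

/-- The tensor algebra `ℚ{X} = T(ℚ[X]⁺)`. -/
abbrev QX (N : ℕ) := TensorAlgebra ℚ (PolyPlus N)

/-- The `j`-th column monomial `m_j = Π_i a_i^{M_{ij}}` of a packed matrix, for a choice
`a : Fin p → Fin N` of `p` variables; it lies in `ℚ[X]⁺` since column `j` is nonzero. -/
def colMonomial (N : ℕ) (P : PackedMatrix) (a : Fin P.p → Fin N) (j : Fin P.q) :
    PolyPlus N :=
  ⟨∏ i, MvPolynomial.X (a i) ^ P.entry i j, by
    obtain ⟨i, hi⟩ := P.cols_nonzero j
    simp only [PolyPlus, Submodule.restrictScalars_mem, RingHom.mem_ker, map_prod, map_pow,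
      MvPolynomial.constantCoeff_X]
    exact Finset.prod_eq_zero (Finset.mem_univ i) (zero_pow hi)⟩

/-- `A^M ∈ ℚ{X}` : the dot product `m₁ · m₂ ⋯ m_q` of the column monomials of `M` on the
variable set `A` (given by a strictly increasing `a : Fin p → Fin N`). -/
def dotMonomial (N : ℕ) (P : PackedMatrix) (a : Fin P.p → Fin N) : QX N :=
  (List.ofFn fun j : Fin P.q => TensorAlgebra.ι ℚ (colMonomial N P a j)).prod

/-- `MS_M = Σ_{A ⊆ X, |A| = p} A^M ∈ ℚ{X}`. -/
def MS (N : ℕ) (P : PackedMatrix) : QX N :=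
  ∑ a ∈ Finset.univ.filter (fun a : Fin P.p → Fin N => StrictMono a),
    dotMonomial N P a

/-- The augmented shuffle `⧢(P,Q)` of two packed matrices: all packed matrices obtained by
inserting zero rows into `P` and `Q` so as to reach a common height and concatenating the
resulting matrices horizontally, keeping only the results with no zero row. Here `f` (resp.
`g`) records the positions of the rows of `P` (resp. `Q`) in the result. -/
def AugShuffle (P Q : PackedMatrix) : Set PackedMatrix :=
  {R | ∃ h : R.q = P.q + Q.q, ∃ (f : Fin P.p → Fin R.p) (g : Fin Q.p → Fin R.p),
    StrictMono f ∧ StrictMono g ∧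
    (∀ i : Fin R.p, i ∈ Set.range f ∨ i ∈ Set.range g) ∧
    (∀ (i : Fin P.p) (j : Fin P.q),
      R.entry (f i) (Fin.cast h.symm (Fin.castAdd Q.q j)) = P.entry i j) ∧
    (∀ i : Fin R.p, i ∉ Set.range f → ∀ j : Fin P.q,
      R.entry i (Fin.cast h.symm (Fin.castAdd Q.q j)) = 0) ∧
    (∀ (i : Fin Q.p) (j : Fin Q.q),
      R.entry (g i) (Fin.cast h.symm (Fin.natAdd P.q j)) = Q.entry i j) ∧
    (∀ i : Fin R.p, i ∉ Set.range g → ∀ j : Fin Q.q,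
      R.entry i (Fin.cast h.symm (Fin.natAdd P.q j)) = 0)}

end

noncomputable section AuxDev

/-- Two strictly monotone maps from `Fin n` with the same range coincide. -/
lemma strictMono_range_eq {n : ℕ} {α : Type*} [LinearOrder α] {f g : Fin n → α}
    (hf : StrictMono f) (hg : StrictMono g) (h : Set.range f = Set.range g) : f = g := by
  classical
  have hmem : ∀ x, f x ∈ Finset.image g Finset.univ := by
    intro x
    have : f x ∈ Set.range g := h ▸ Set.mem_range_self x
    obtain ⟨y, hy⟩ := this
    exact Finset.mem_image.2 ⟨y, Finset.mem_univ _, hy⟩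
  have hcard : (Finset.image g Finset.univ).card = n := by
    rw [Finset.card_image_of_injective _ hg.injective, Finset.card_univ, Fintype.card_fin]
  exact (Finset.orderEmbOfFin_unique hcard hmem hf).trans
    (Finset.orderEmbOfFin_unique hcard
      (fun x => Finset.mem_image_of_mem _ (Finset.mem_univ x)) hg).symm

lemma strictMono_range_eq' {m n : ℕ} {α : Type*} [LinearOrder α] {f : Fin m → α} {g : Fin n → α}
    (hf : StrictMono f) (hg : StrictMono g) (h : Set.range f = Set.range g) :
    ∃ hmn : m = n, ∀ i, f i = g (Fin.cast hmn i) := by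
  have hmn : m = n := by
    have h1 : Nat.card (Set.range f) = m := by
      rw [Nat.card_range_of_injective hf.injective, Nat.card_eq_fintype_card, Fintype.card_fin]
    have h2 : Nat.card (Set.range g) = n := by
      rw [Nat.card_range_of_injective hg.injective, Nat.card_eq_fintype_card, Fintype.card_fin]
    rw [← h1, ← h2, h]
  subst hmn
  exact ⟨rfl, congrFun (strictMono_range_eq hf hg h)⟩

/-- A riffle datum: a common height `r` together with strictly monotone position maps for the
rows of the two matrices, whose ranges cover everything. -/
abbrev Riffle (p q : ℕ) : Type :=
  {x : Σ r : Fin (p + q + 1), (Fin p → Fin r) × (Fin q → Fin r) //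
    StrictMono x.2.1 ∧ StrictMono x.2.2 ∧
    ∀ i, i ∈ Set.range x.2.1 ∨ i ∈ Set.range x.2.2}

instance (p q : ℕ) : Fintype (Riffle p q) := by
  unfold Riffle; infer_instance

namespace Riffle

variable {p q : ℕ}

abbrev r (σ : Riffle p q) : ℕ := σ.1.1
abbrev f (σ : Riffle p q) : Fin p → Fin σ.r := σ.1.2.1
abbrev g (σ : Riffle p q) : Fin q → Fin σ.r := σ.1.2.2
lemma hf (σ : Riffle p q) : StrictMono σ.f := σ.2.1
lemma hg (σ : Riffle p q) : StrictMono σ.g := σ.2.2.1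
lemma cover (σ : Riffle p q) : ∀ i, i ∈ Set.range σ.f ∨ i ∈ Set.range σ.g := σ.2.2.2

lemma ext' {x y : Riffle p q} (hr : x.r = y.r)
    (hff : ∀ i, (x.f i : ℕ) = y.f i) (hgg : ∀ i, (x.g i : ℕ) = y.g i) : x = y := by
  obtain ⟨⟨⟨r1, hr1⟩, f1, g1⟩, hx⟩ := x
  obtain ⟨⟨⟨r2, hr2⟩, f2, g2⟩, hy⟩ := y
  simp only [Riffle.r, Riffle.f, Riffle.g] at hr hff hgg
  subst hr
  have h1 : f1 = f2 := funext fun i => Fin.ext (hff i)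
  have h2 : g1 = g2 := funext fun i => Fin.ext (hgg i)
  subst h1; subst h2
  rfl

end Riffle

open Finset in
lemma fiber_sum_apply {p r : ℕ} {f : Fin p → Fin r} (hf : Function.Injective f)
    (e : Fin p → ℕ) (k : Fin p) :
    ∑ k' ∈ Finset.univ.filter (fun k' => f k' = f k), e k' = e k := by
  rw [show Finset.univ.filter (fun k' => f k' = f k) = {k} from ?_, Finset.sum_singleton]
  ext k'
  simp [hf.eq_iff]

lemma fiber_sum_zero {p r : ℕ} {f : Fin p → Fin r} (e : Fin p → ℕ) {i : Fin r}
    (hi : i ∉ Set.range f) :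
    ∑ k' ∈ Finset.univ.filter (fun k' => f k' = i), e k' = 0 := by
  rw [Finset.filter_false_of_mem, Finset.sum_empty]
  intro k _ h
  exact (hi ⟨k, h⟩).elim

/-- The packed matrix obtained from a riffle of `P` and `Q`. -/
@[reducible] def shuffleMatrix (P Q : PackedMatrix) (σ : Riffle P.p Q.p) : PackedMatrix where
  p := σ.r
  q := P.q + Q.q
  entry i := Fin.addCases
    (fun j => ∑ k ∈ Finset.univ.filter (fun k => σ.f k = i), P.entry k j)
    (fun j => ∑ k ∈ Finset.univ.filter (fun k => σ.g k = i), Q.entry k j)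
  rows_nonzero := by
    intro i
    rcases σ.cover i with ⟨k, rfl⟩ | ⟨k, rfl⟩
    · obtain ⟨j, hj⟩ := P.rows_nonzero k
      exact ⟨Fin.castAdd Q.q j, by
        simpa [Fin.addCases_left, fiber_sum_apply σ.hf.injective] using hj⟩
    · obtain ⟨j, hj⟩ := Q.rows_nonzero k
      exact ⟨Fin.natAdd P.q j, by
        simpa [Fin.addCases_right, fiber_sum_apply σ.hg.injective] using hj⟩
  cols_nonzero := by
    intro j
    refine Fin.addCases (fun j => ?_) (fun j => ?_) j
    · obtain ⟨k, hk⟩ := P.cols_nonzero j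
      exact ⟨σ.f k, by
        simpa [Fin.addCases_left, fiber_sum_apply σ.hf.injective] using hk⟩
    · obtain ⟨k, hk⟩ := Q.cols_nonzero j
      exact ⟨σ.g k, by
        simpa [Fin.addCases_right, fiber_sum_apply σ.hg.injective] using hk⟩

lemma shuffle_p (P Q : PackedMatrix) (σ : Riffle P.p Q.p) : (shuffleMatrix P Q σ).p = σ.r := rfl

lemma shuffle_entry_left (P Q : PackedMatrix) (σ : Riffle P.p Q.p) (i : Fin σ.r) (j : Fin P.q) :
    (shuffleMatrix P Q σ).entry i (Fin.castAdd Q.q j)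
      = ∑ k ∈ Finset.univ.filter (fun k => σ.f k = i), P.entry k j := by
  simp [shuffleMatrix, Fin.addCases_left]

lemma shuffle_entry_right (P Q : PackedMatrix) (σ : Riffle P.p Q.p) (i : Fin σ.r) (j : Fin Q.q) :
    (shuffleMatrix P Q σ).entry i (Fin.natAdd P.q j)
      = ∑ k ∈ Finset.univ.filter (fun k => σ.g k = i), Q.entry k j := by
  simp [shuffleMatrix, Fin.addCases_right]


lemma PackedMatrix.ext' {A B : PackedMatrix} (hp : A.p = B.p) (hq : A.q = B.q)
    (he : ∀ i j, A.entry i j = B.entry (Fin.cast hp i) (Fin.cast hq j)) : A = B := by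
  obtain ⟨p, q, e, h1, h2⟩ := A
  obtain ⟨p', q', e', h1', h2'⟩ := B
  dsimp at hp hq he
  subst hp; subst hq
  have : e = e' := by
    funext i j
    have := he i j
    simpa using this
  subst this
  rfl

lemma PackedMatrix.entry_congr {A B : PackedMatrix} (hAB : A = B) (hp : A.p = B.p)
    (hq : A.q = B.q) (i : Fin A.p) (j : Fin A.q) :
    A.entry i j = B.entry (Fin.cast hp i) (Fin.cast hq j) := by
  subst hAB
  rfl

lemma shuffleMatrix_mem (P Q : PackedMatrix) (σ : Riffle P.p Q.p) :
    shuffleMatrix P Q σ ∈ AugShuffle P Q := by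
  refine ⟨rfl, σ.f, σ.g, σ.hf, σ.hg, σ.cover, ?_, ?_, ?_, ?_⟩
  · intro i j
    have := shuffle_entry_left P Q σ (σ.f i) j
    rw [fiber_sum_apply σ.hf.injective] at this
    exact this
  · intro i hi j
    have := shuffle_entry_left P Q σ i j
    rw [fiber_sum_zero _ hi] at this
    exact this
  · intro i j
    have := shuffle_entry_right P Q σ (σ.g i) j
    rw [fiber_sum_apply σ.hg.injective] at this
    exact this
  · intro i hi j
    have := shuffle_entry_right P Q σ i j
    rw [fiber_sum_zero _ hi] at this
    exact this

lemma shuffleMatrix_surj {P Q R : PackedMatrix} (hR : R ∈ AugShuffle P Q) :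
    ∃ σ : Riffle P.p Q.p, shuffleMatrix P Q σ = R := by
  obtain ⟨h, f, g, hf, hg, cover, hPf, hP0, hQg, hQ0⟩ := hR
  have hcard : R.p < P.p + Q.p + 1 := by
    have hsub : (Finset.univ : Finset (Fin R.p)) ⊆
        Finset.image f Finset.univ ∪ Finset.image g Finset.univ := by
      intro i _
      rcases cover i with ⟨k, hk⟩ | ⟨k, hk⟩
      · exact Finset.mem_union_left _ (Finset.mem_image.2 ⟨k, Finset.mem_univ _, hk⟩)
      · exact Finset.mem_union_right _ (Finset.mem_image.2 ⟨k, Finset.mem_univ _, hk⟩)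
    have h1 : (Finset.image f Finset.univ).card ≤ P.p :=
      Finset.card_image_le.trans (by simp)
    have h2 : (Finset.image g Finset.univ).card ≤ Q.p :=
      Finset.card_image_le.trans (by simp)
    have := (Finset.card_le_card hsub).trans
      ((Finset.card_union_le _ _).trans (Nat.add_le_add h1 h2))
    exact Nat.lt_succ_of_le (by simpa using this)
  refine ⟨⟨⟨⟨R.p, hcard⟩, f, g⟩, hf, hg, cover⟩, ?_⟩
  refine PackedMatrix.ext' rfl h.symm ?_
  intro i j
  refine Fin.addCases (fun j => ?_) (fun j => ?_) j
  all_goals simp only [Riffle.f, Riffle.g, shuffle_entry_left, shuffle_entry_right,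
    Fin.addCases_left, Fin.addCases_right]
  · by_cases hi : i ∈ Set.range f
    · obtain ⟨k, rfl⟩ := hi
      rw [fiber_sum_apply hf.injective]
      exact (hPf k j).symm
    · rw [fiber_sum_zero _ hi]
      exact (hP0 i hi j).symm
  · by_cases hi : i ∈ Set.range g
    · obtain ⟨k, rfl⟩ := hi
      rw [fiber_sum_apply hg.injective]
      exact (hQg k j).symm
    · rw [fiber_sum_zero _ hi]
      exact (hQ0 i hi j).symm

lemma mem_range_f_iff (P Q : PackedMatrix) (σ : Riffle P.p Q.p) (i : Fin σ.r) :
    i ∈ Set.range σ.f ↔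
      ∃ j, (shuffleMatrix P Q σ).entry i (Fin.castAdd Q.q j) ≠ 0 := by
  constructor
  · rintro ⟨k, rfl⟩
    obtain ⟨j, hj⟩ := P.rows_nonzero k
    exact ⟨j, by rwa [shuffle_entry_left, fiber_sum_apply σ.hf.injective]⟩
  · rintro ⟨j, hj⟩
    by_contra hi
    rw [shuffle_entry_left, fiber_sum_zero _ hi] at hj
    exact hj rfl

lemma mem_range_g_iff (P Q : PackedMatrix) (σ : Riffle P.p Q.p) (i : Fin σ.r) :
    i ∈ Set.range σ.g ↔
      ∃ j, (shuffleMatrix P Q σ).entry i (Fin.natAdd P.q j) ≠ 0 := by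
  constructor
  · rintro ⟨k, rfl⟩
    obtain ⟨j, hj⟩ := Q.rows_nonzero k
    exact ⟨j, by rwa [shuffle_entry_right, fiber_sum_apply σ.hg.injective]⟩
  · rintro ⟨j, hj⟩
    by_contra hi
    rw [shuffle_entry_right, fiber_sum_zero _ hi] at hj
    exact hj rfl

lemma shuffleMatrix_injective (P Q : PackedMatrix) :
    Function.Injective (shuffleMatrix P Q) := by
  intro σ τ hE
  have hr : σ.r = τ.r := congrArg PackedMatrix.p hE
  have hent : ∀ (i : Fin σ.r) (j : Fin (P.q + Q.q)),
      (shuffleMatrix P Q σ).entry i j =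
        (shuffleMatrix P Q τ).entry (Fin.cast hr i) (Fin.cast rfl j) :=
    fun i j => PackedMatrix.entry_congr hE hr rfl i j
  have hcastAdd : ∀ j : Fin P.q, (Fin.cast (rfl : P.q + Q.q = P.q + Q.q)
      (Fin.castAdd Q.q j)) = Fin.castAdd Q.q j := fun j => Fin.ext (by simp)
  have hnatAdd : ∀ j : Fin Q.q, (Fin.cast (rfl : P.q + Q.q = P.q + Q.q)
      (Fin.natAdd P.q j)) = Fin.natAdd P.q j := fun j => Fin.ext (by simp)
  have hrangef : Set.range (Fin.cast hr ∘ σ.f) = Set.range τ.f := by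
    ext i'
    have hcc : Fin.cast hr (Fin.cast hr.symm i') = i' := Fin.ext (by simp)
    constructor
    · rintro ⟨k, rfl⟩
      rw [(mem_range_f_iff P Q τ _)]
      obtain ⟨j, hj⟩ := (mem_range_f_iff P Q σ (σ.f k)).1 ⟨k, rfl⟩
      exact ⟨j, by
        show (shuffleMatrix P Q τ).entry (Fin.cast hr (σ.f k)) (Fin.castAdd Q.q j) ≠ 0
        rw [← hcastAdd j, ← hent (σ.f k) (Fin.castAdd Q.q j)]
        exact hj⟩
    · intro hi'
      obtain ⟨j, hj⟩ := (mem_range_f_iff P Q τ i').1 hi'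
      have : (shuffleMatrix P Q σ).entry (Fin.cast hr.symm i') (Fin.castAdd Q.q j) ≠ 0 := by
        rw [hent, hcastAdd, hcc]
        exact hj
      obtain ⟨k, hk⟩ := (mem_range_f_iff P Q σ _).2 ⟨j, this⟩
      exact ⟨k, by rw [Function.comp_apply, hk, hcc]⟩
  have hrangeg : Set.range (Fin.cast hr ∘ σ.g) = Set.range τ.g := by
    ext i'
    have hcc : Fin.cast hr (Fin.cast hr.symm i') = i' := Fin.ext (by simp)
    constructor
    · rintro ⟨k, rfl⟩
      rw [(mem_range_g_iff P Q τ _)]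
      obtain ⟨j, hj⟩ := (mem_range_g_iff P Q σ (σ.g k)).1 ⟨k, rfl⟩
      exact ⟨j, by
        show (shuffleMatrix P Q τ).entry (Fin.cast hr (σ.g k)) (Fin.natAdd P.q j) ≠ 0
        rw [← hnatAdd j, ← hent (σ.g k) (Fin.natAdd P.q j)]
        exact hj⟩
    · intro hi'
      obtain ⟨j, hj⟩ := (mem_range_g_iff P Q τ i').1 hi'
      have : (shuffleMatrix P Q σ).entry (Fin.cast hr.symm i') (Fin.natAdd P.q j) ≠ 0 := by
        rw [hent, hnatAdd, hcc]
        exact hj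
      obtain ⟨k, hk⟩ := (mem_range_g_iff P Q σ _).2 ⟨j, this⟩
      exact ⟨k, by rw [Function.comp_apply, hk, hcc]⟩
  have hcaststrict : StrictMono (Fin.cast hr) := fun a b hab => by
    simp only [Fin.lt_def, Fin.coe_cast]
    exact hab
  have hfs : Fin.cast hr ∘ σ.f = τ.f :=
    strictMono_range_eq (hcaststrict.comp σ.hf) τ.hf hrangef
  have hgs : Fin.cast hr ∘ σ.g = τ.g :=
    strictMono_range_eq (hcaststrict.comp σ.hg) τ.hg hrangeg
  refine Riffle.ext' hr (fun i => ?_) (fun i => ?_)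
  · exact (Fin.coe_cast hr (σ.f i)).symm.trans (congrArg Fin.val (congrFun hfs i))
  · exact (Fin.coe_cast hr (σ.g i)).symm.trans (congrArg Fin.val (congrFun hgs i))

lemma range_shuffleMatrix (P Q : PackedMatrix) :
    Set.range (shuffleMatrix P Q) = AugShuffle P Q := by
  ext R
  constructor
  · rintro ⟨σ, rfl⟩
    exact shuffleMatrix_mem P Q σ
  · intro hR
    exact shuffleMatrix_surj hR

end AuxDev

section AlgebraSide

lemma colMonomial_shuffle_left (N : ℕ) (P Q : PackedMatrix) (σ : Riffle P.p Q.p)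
    (c : Fin (shuffleMatrix P Q σ).p → Fin N) (j : Fin P.q) :
    colMonomial N (shuffleMatrix P Q σ) c (Fin.castAdd Q.q j)
      = colMonomial N P (fun k => c (σ.f k)) j := by
  apply Subtype.ext
  show (∏ i, MvPolynomial.X (c i) ^ (shuffleMatrix P Q σ).entry i (Fin.castAdd Q.q j))
      = ∏ k, MvPolynomial.X (c (σ.f k)) ^ P.entry k j
  calc ∏ i, MvPolynomial.X (c i) ^ (shuffleMatrix P Q σ).entry i (Fin.castAdd Q.q j)
      = ∏ i, ∏ k ∈ Finset.univ.filter (fun k => σ.f k = i),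
          MvPolynomial.X (c (σ.f k)) ^ P.entry k j := by
        refine Finset.prod_congr rfl fun i _ => ?_
        rw [shuffle_entry_left, ← Finset.prod_pow_eq_pow_sum]
        refine Finset.prod_congr rfl fun k hk => ?_
        rw [(Finset.mem_filter.1 hk).2]
    _ = ∏ k, MvPolynomial.X (c (σ.f k)) ^ P.entry k j :=
        Finset.prod_fiberwise _ _ _

lemma colMonomial_shuffle_right (N : ℕ) (P Q : PackedMatrix) (σ : Riffle P.p Q.p)
    (c : Fin (shuffleMatrix P Q σ).p → Fin N) (j : Fin Q.q) :
    colMonomial N (shuffleMatrix P Q σ) c (Fin.natAdd P.q j)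
      = colMonomial N Q (fun k => c (σ.g k)) j := by
  apply Subtype.ext
  show (∏ i, MvPolynomial.X (c i) ^ (shuffleMatrix P Q σ).entry i (Fin.natAdd P.q j))
      = ∏ k, MvPolynomial.X (c (σ.g k)) ^ Q.entry k j
  calc ∏ i, MvPolynomial.X (c i) ^ (shuffleMatrix P Q σ).entry i (Fin.natAdd P.q j)
      = ∏ i, ∏ k ∈ Finset.univ.filter (fun k => σ.g k = i),
          MvPolynomial.X (c (σ.g k)) ^ Q.entry k j := by
        refine Finset.prod_congr rfl fun i _ => ?_
        rw [shuffle_entry_right, ← Finset.prod_pow_eq_pow_sum]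
        refine Finset.prod_congr rfl fun k hk => ?_
        rw [(Finset.mem_filter.1 hk).2]
    _ = ∏ k, MvPolynomial.X (c (σ.g k)) ^ Q.entry k j :=
        Finset.prod_fiberwise _ _ _

lemma dot_shuffle (N : ℕ) (P Q : PackedMatrix) (σ : Riffle P.p Q.p)
    (c : Fin (shuffleMatrix P Q σ).p → Fin N) :
    dotMonomial N (shuffleMatrix P Q σ) c
      = dotMonomial N P (fun k => c (σ.f k)) * dotMonomial N Q (fun k => c (σ.g k)) := by
  unfold dotMonomial
  change (List.ofFn fun j : Fin (P.q + Q.q) =>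
      TensorAlgebra.ι ℚ (colMonomial N (shuffleMatrix P Q σ) c j)).prod = _
  rw [List.ofFn_add (f := fun j : Fin (P.q + Q.q) =>
      TensorAlgebra.ι ℚ (colMonomial N (shuffleMatrix P Q σ) c j)), List.prod_append]
  congr 1
  · exact congrArg List.prod (congrArg List.ofFn (funext fun j =>
      congrArg (TensorAlgebra.ι ℚ) (colMonomial_shuffle_left N P Q σ c j)))
  · exact congrArg List.prod (congrArg List.ofFn (funext fun j =>
      congrArg (TensorAlgebra.ι ℚ) (colMonomial_shuffle_right N P Q σ c j)))

end AlgebraSide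

section Bijection

lemma riffle_exists (N : ℕ) {P Q : PackedMatrix} {a : Fin P.p → Fin N} {b : Fin Q.p → Fin N}
    (ha : StrictMono a) (hb : StrictMono b) :
    ∃ (σ : Riffle P.p Q.p) (c : Fin (shuffleMatrix P Q σ).p → Fin N),
      StrictMono c ∧ (fun k => c (σ.f k)) = a ∧ (fun k => c (σ.g k)) = b := by
  classical
  set C : Finset (Fin N) := Finset.image a Finset.univ ∪ Finset.image b Finset.univ with hC
  have hcard : C.card < P.p + Q.p + 1 := by
    have h1 : (Finset.image a Finset.univ).card ≤ P.p := Finset.card_image_le.trans (by simp)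
    have h2 : (Finset.image b Finset.univ).card ≤ Q.p := Finset.card_image_le.trans (by simp)
    exact Nat.lt_succ_of_le ((Finset.card_union_le _ _).trans (Nat.add_le_add h1 h2))
  have hmema : ∀ i, a i ∈ C :=
    fun i => Finset.mem_union_left _ (Finset.mem_image_of_mem _ (Finset.mem_univ i))
  have hmemb : ∀ i, b i ∈ C :=
    fun i => Finset.mem_union_right _ (Finset.mem_image_of_mem _ (Finset.mem_univ i))
  set e := C.orderIsoOfFin rfl with he
  set c : Fin C.card → Fin N := fun i => C.orderEmbOfFin rfl i with hc
  have hcmono : StrictMono c := (C.orderEmbOfFin rfl).strictMono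
  set f : Fin P.p → Fin C.card := fun k => e.symm ⟨a k, hmema k⟩ with hf
  set g : Fin Q.p → Fin C.card := fun k => e.symm ⟨b k, hmemb k⟩ with hg
  have hcf : ∀ k, c (f k) = a k := by
    intro k
    show (C.orderEmbOfFin rfl) (f k) = a k
    rw [← Finset.coe_orderIsoOfFin_apply, ← he, hf]
    simp
  have hcg : ∀ k, c (g k) = b k := by
    intro k
    show (C.orderEmbOfFin rfl) (g k) = b k
    rw [← Finset.coe_orderIsoOfFin_apply, ← he, hg]
    simp
  have hfmono : StrictMono f := by
    intro i j hij
    have h1 : (⟨a i, hmema i⟩ : {x // x ∈ C}) < ⟨a j, hmema j⟩ := Subtype.mk_lt_mk.2 (ha hij)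
    exact e.symm.strictMono h1
  have hgmono : StrictMono g := by
    intro i j hij
    have h1 : (⟨b i, hmemb i⟩ : {x // x ∈ C}) < ⟨b j, hmemb j⟩ := Subtype.mk_lt_mk.2 (hb hij)
    exact e.symm.strictMono h1
  have hcover : ∀ i : Fin C.card, i ∈ Set.range f ∨ i ∈ Set.range g := by
    intro i
    have hmem : c i ∈ C := Finset.orderEmbOfFin_mem _ _ _
    rcases Finset.mem_union.1 hmem with h | h
    · obtain ⟨k, _, hk⟩ := Finset.mem_image.1 h
      exact Or.inl ⟨k, hcmono.injective (by rw [hcf k, hk])⟩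
    · obtain ⟨k, _, hk⟩ := Finset.mem_image.1 h
      exact Or.inr ⟨k, hcmono.injective (by rw [hcg k, hk])⟩
  exact ⟨⟨⟨⟨C.card, hcard⟩, f, g⟩, hfmono, hgmono, hcover⟩, c, hcmono,
    funext hcf, funext hcg⟩

lemma riffle_inj (N : ℕ) {P Q : PackedMatrix} {σ τ : Riffle P.p Q.p}
    {c : Fin (shuffleMatrix P Q σ).p → Fin N} {d : Fin (shuffleMatrix P Q τ).p → Fin N}
    (hc : StrictMono c) (hd : StrictMono d)
    (h1 : ∀ k, c (σ.f k) = d (τ.f k)) (h2 : ∀ k, c (σ.g k) = d (τ.g k)) :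
    (⟨σ, c⟩ : Σ σ : Riffle P.p Q.p, Fin (shuffleMatrix P Q σ).p → Fin N) = ⟨τ, d⟩ := by
  have hrange : Set.range c = Set.range d := by
    ext v
    constructor
    · rintro ⟨i, rfl⟩
      rcases σ.cover i with ⟨k, rfl⟩ | ⟨k, rfl⟩
      · exact ⟨τ.f k, (h1 k).symm⟩
      · exact ⟨τ.g k, (h2 k).symm⟩
    · rintro ⟨i, rfl⟩
      rcases τ.cover i with ⟨k, rfl⟩ | ⟨k, rfl⟩
      · exact ⟨σ.f k, h1 k⟩
      · exact ⟨σ.g k, h2 k⟩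
  obtain ⟨hr, hcd⟩ := strictMono_range_eq' hc hd hrange
  have hστ : σ = τ := by
    refine Riffle.ext' hr (fun k => ?_) (fun k => ?_)
    · have hee : Fin.cast hr (σ.f k) = τ.f k :=
        hd.injective ((hcd (σ.f k)).symm.trans (h1 k))
      exact (Fin.coe_cast hr (σ.f k)).symm.trans (congrArg Fin.val hee)
    · have hee : Fin.cast hr (σ.g k) = τ.g k :=
        hd.injective ((hcd (σ.g k)).symm.trans (h2 k))
      exact (Fin.coe_cast hr (σ.g k)).symm.trans (congrArg Fin.val hee)
  subst hστ
  have hcd' : c = d := funext fun i =>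
    (hcd i).trans (congrArg d (Fin.ext (Fin.coe_cast hr i)))
  rw [hcd']

end Bijection

lemma MS_mul_eq_sum_riffle (N : ℕ) (P Q : PackedMatrix) :
    MS N P * MS N Q = ∑ σ : Riffle P.p Q.p, MS N (shuffleMatrix P Q σ) := by
  classical
  unfold MS
  rw [Finset.sum_mul_sum]
  rw [← Finset.sum_product' (s := Finset.univ.filter fun a : Fin P.p → Fin N => StrictMono a)
    (t := Finset.univ.filter fun b : Fin Q.p → Fin N => StrictMono b)
    (f := fun a b => dotMonomial N P a * dotMonomial N Q b)]
  rw [show (∑ σ : Riffle P.p Q.p,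
      ∑ c ∈ Finset.univ.filter
        (fun c : Fin (shuffleMatrix P Q σ).p → Fin N => StrictMono c),
      dotMonomial N (shuffleMatrix P Q σ) c)
    = ∑ x ∈ (Finset.univ : Finset (Riffle P.p Q.p)).sigma
        (fun σ => Finset.univ.filter
          (fun c : Fin (shuffleMatrix P Q σ).p → Fin N => StrictMono c)),
      dotMonomial N (shuffleMatrix P Q x.1) x.2 from Finset.sum_sigma' _ _ _]
  refine (Finset.sum_bij
    (fun x _ => ((fun k => x.2 (x.1.f k)), (fun k => x.2 (x.1.g k)))) ?_ ?_ ?_ ?_).symm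
  · rintro ⟨σ, c⟩ hx
    have hc : StrictMono c := (Finset.mem_filter.1 (Finset.mem_sigma.1 hx).2).2
    refine Finset.mem_product.2 ⟨Finset.mem_filter.2 ⟨Finset.mem_univ _, ?_⟩,
      Finset.mem_filter.2 ⟨Finset.mem_univ _, ?_⟩⟩
    · exact fun i j hij => hc (σ.hf hij)
    · exact fun i j hij => hc (σ.hg hij)
  · rintro ⟨σ, c⟩ hx ⟨τ, d⟩ hy hxy
    have hc : StrictMono c := (Finset.mem_filter.1 (Finset.mem_sigma.1 hx).2).2
    have hd : StrictMono d := (Finset.mem_filter.1 (Finset.mem_sigma.1 hy).2).2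
    have h1 := congrArg Prod.fst hxy
    have h2 := congrArg Prod.snd hxy
    exact riffle_inj N hc hd (fun k => congrFun h1 k) (fun k => congrFun h2 k)
  · rintro ⟨a, b⟩ hab
    have ha : StrictMono a := (Finset.mem_filter.1 (Finset.mem_product.1 hab).1).2
    have hb : StrictMono b := (Finset.mem_filter.1 (Finset.mem_product.1 hab).2).2
    obtain ⟨σ, c, hc, hca, hcb⟩ := riffle_exists N ha hb
    exact ⟨⟨σ, c⟩, Finset.mem_sigma.2 ⟨Finset.mem_univ _,
      Finset.mem_filter.2 ⟨Finset.mem_univ _, hc⟩⟩, by simp [hca, hcb]⟩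
  · rintro ⟨σ, c⟩ _
    exact dot_shuffle N P Q σ c

noncomputable section

/-- `MS_P · MS_Q = Σ_{R ∈ ⧢(P,Q)} MS_R` in `ℚ{X}`; in particular the
linear span of the `MS_M` is a subalgebra of `ℚ{X}`. -/
theorem MS_mul (N : ℕ) (hN : 1 ≤ N) :
    (∀ P Q : PackedMatrix, MS N P * MS N Q = ∑ᶠ R ∈ AugShuffle P Q, MS N R) ∧
    (∀ x y : QX N,
      x ∈ Submodule.span ℚ (Set.range (MS N)) →
      y ∈ Submodule.span ℚ (Set.range (MS N)) →
      x * y ∈ Submodule.span ℚ (Set.range (MS N))) := by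
  have key : ∀ P Q : PackedMatrix,
      MS N P * MS N Q = ∑ᶠ R ∈ AugShuffle P Q, MS N R := by
    intro P Q
    rw [← range_shuffleMatrix P Q, finsum_mem_range (shuffleMatrix_injective P Q),
      finsum_eq_sum_of_fintype]
    exact MS_mul_eq_sum_riffle N P Q
  refine ⟨key, ?_⟩
  intro x y hx hy
  have Hgen : ∀ (P : PackedMatrix) (z : QX N),
      z ∈ Submodule.span ℚ (Set.range (MS N)) →
      MS N P * z ∈ Submodule.span ℚ (Set.range (MS N)) := by
    intro P z hz
    refine Submodule.span_induction
      (p := fun z _ => MS N P * z ∈ Submodule.span ℚ (Set.range (MS N)))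
      ?_ ?_ ?_ ?_ hz
    · rintro w ⟨Q, rfl⟩
      rw [MS_mul_eq_sum_riffle N P Q]
      exact Submodule.sum_mem _ fun σ _ => Submodule.subset_span ⟨_, rfl⟩
    · show MS N P * 0 ∈ _
      rw [mul_zero]; exact Submodule.zero_mem _
    · intro u v _ _ hu hv
      rw [mul_add]; exact Submodule.add_mem _ hu hv
    · intro r u _ hu
      rw [mul_smul_comm]; exact Submodule.smul_mem _ _ hu
  refine Submodule.span_induction
    (p := fun x _ => x * y ∈ Submodule.span ℚ (Set.range (MS N)))
    ?_ ?_ ?_ ?_ hx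
  · rintro w ⟨P, rfl⟩
    exact Hgen P y hy
  · show (0 : QX N) * y ∈ _
    rw [zero_mul]; exact Submodule.zero_mem _
  · intro u v _ _ hu hv
    rw [add_mul]; exact Submodule.add_mem _ hu hv
  · intro r u _ hu
    rw [smul_mul_assoc]; exact Submodule.smul_mem _ _ hu

end
end

section
/- Let I and J be compositions and N ≥ 1. Then in the tensor algebra ℚ{X}: (Σ_{P packed, Col(P)=I} MS_P) · (Σ_{Q packed, Col(Q)=J} MS_Q) = Σ_{R packed, Col(R)=I·J} MS_R, where I·J denotes the concatenation of the compositions I and J and the sums are over all packed matrices with the indicated composition of column sums. (This says that S^I ↦ Σ_{Col(P)=I} MS_P defines an algebra homomorphism embedding the noncommutative symmetric functions into MQSym.) -/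
open scoped Classical

noncomputable section

/-- The composition of column sums of a packed matrix, as a list. -/
def colComp (P : PackedMatrix) : List ℕ :=
  List.ofFn fun j : Fin P.q => ∑ i, P.entry i j

section AuxMS

open Finset

theorem PackedMatrix.ext'_s17 {P Q : PackedMatrix} (hp : P.p = Q.p) (hq : P.q = Q.q)
    (he : ∀ (i : Fin P.p) (j : Fin P.q),
      P.entry i j = Q.entry (Fin.cast hp i) (Fin.cast hq j)) : P = Q := by
  obtain ⟨p, q, E, hr, hc⟩ := P
  obtain ⟨p', q', E', hr', hc'⟩ := Q
  dsimp at hp hq he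
  subst hp; subst hq
  obtain rfl : E = E' := by funext i j; simpa using he i j
  rfl

/-- length of `colComp`. -/
theorem colComp_length (P : PackedMatrix) : (colComp P).length = P.q := by
  simp [colComp]

/-- The element of `ℚ[X]⁺` given by the monomial with exponent vector `m` (corrected by a
constant so that it has zero constant term even when `m = 0`). -/
noncomputable def monPP (N : ℕ) (m : Fin N → ℕ) : PolyPlus N :=
  ⟨(∏ x, MvPolynomial.X x ^ m x) - if ∀ x, m x = 0 then 1 else 0, by
    simp only [PolyPlus, Submodule.restrictScalars_mem, RingHom.mem_ker, map_sub, map_prod,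
      map_pow, MvPolynomial.constantCoeff_X]
    by_cases h : ∀ x, m x = 0
    · simp [h]
    · push_neg at h
      obtain ⟨x, hx⟩ := h
      rw [if_neg (by push_neg; exact ⟨x, hx⟩), map_zero, sub_zero]
      exact Finset.prod_eq_zero (Finset.mem_univ x) (zero_pow hx)⟩

theorem monPP_coe {N : ℕ} (m : Fin N → ℕ) (h : ¬ ∀ x, m x = 0) :
    (monPP N m : MvPolynomial (Fin N) ℚ) = ∏ x, MvPolynomial.X x ^ m x := by
  simp [monPP, h]

/-- The analogue of `dotMonomial` for a full matrix `M` indexed by all of `Fin N`. -/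
noncomputable def Ff (N q : ℕ) (M : Fin N → Fin q → ℕ) : QX N :=
  (List.ofFn fun j : Fin q => TensorAlgebra.ι ℚ (monPP N fun x => M x j)).prod

/-- The finset of matrices `Fin N → Fin q → ℕ` with column sums `c`. -/
noncomputable def Mset (N q : ℕ) (c : Fin q → ℕ) : Finset (Fin N → Fin q → ℕ) :=
  (Fintype.piFinset fun _ : Fin N => Fintype.piFinset fun j : Fin q =>
      Finset.range (c j + 1)).filter fun M => ∀ j, ∑ x, M x j = c j

theorem mem_Mset {N q : ℕ} {c : Fin q → ℕ} {M : Fin N → Fin q → ℕ} :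
    M ∈ Mset N q c ↔ ∀ j, ∑ x, M x j = c j := by
  simp only [Mset, Finset.mem_filter, Fintype.mem_piFinset, Finset.mem_range]
  refine ⟨fun h => h.2, fun h => ⟨fun x j => ?_, h⟩⟩
  exact Nat.lt_succ_of_le ((h j) ▸ Finset.single_le_sum
    (f := fun x => M x j) (fun _ _ => Nat.zero_le _) (Finset.mem_univ x))

theorem Ff_mul {N q1 q2 : ℕ} (M1 : Fin N → Fin q1 → ℕ) (M2 : Fin N → Fin q2 → ℕ) :
    Ff N q1 M1 * Ff N q2 M2 = Ff N (q1 + q2) (fun x => Fin.append (M1 x) (M2 x)) := by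
  simp only [Ff, List.ofFn_add, List.prod_append, Fin.append_left, Fin.append_right]
  refine congrArg (· * _) (congrArg List.prod (congrArg List.ofFn (funext fun i => ?_)))
  exact congrArg _ (congrArg _ (funext fun x => (Fin.append_left (M1 x) (M2 x) i).symm))

theorem sum_Ff_mul (N q1 q2 : ℕ) (c1 : Fin q1 → ℕ) (c2 : Fin q2 → ℕ) :
    (∑ M ∈ Mset N q1 c1, Ff N q1 M) * (∑ M ∈ Mset N q2 c2, Ff N q2 M)
      = ∑ M ∈ Mset N (q1 + q2) (Fin.append c1 c2), Ff N (q1 + q2) M := by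
  rw [Finset.sum_mul_sum, ← Finset.sum_product']
  refine Finset.sum_bij' (fun p _ => fun x => Fin.append (p.1 x) (p.2 x))
    (fun M _ => (fun x j => M x (Fin.castAdd q2 j), fun x j => M x (Fin.natAdd q1 j)))
    ?_ ?_ ?_ ?_ ?_
  · rintro ⟨M1, M2⟩ hp
    rw [Finset.mem_product] at hp
    rw [mem_Mset]
    intro j
    refine Fin.addCases (fun j => ?_) (fun j => ?_) j
    · simpa [Fin.append_left] using (mem_Mset.1 hp.1) j
    · simpa [Fin.append_right] using (mem_Mset.1 hp.2) j
  · intro M hM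
    rw [Finset.mem_product]
    constructor
    · rw [mem_Mset]; intro j
      simpa [Fin.append_left] using (mem_Mset.1 hM) (Fin.castAdd q2 j)
    · rw [mem_Mset]; intro j
      simpa [Fin.append_right] using (mem_Mset.1 hM) (Fin.natAdd q1 j)
  · rintro ⟨M1, M2⟩ _
    ext x j
    · simp [Fin.append_left]
    · simp [Fin.append_right]
  · intro M _
    funext x j
    refine Fin.addCases (fun j => ?_) (fun j => ?_) j
    · simp [Fin.append_left]
    · simp [Fin.append_right]
  · rintro ⟨M1, M2⟩ _
    exact Ff_mul M1 M2

end AuxMS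

section AuxMS2

open Finset

theorem ofFn_eq_ofFn {α : Type*} {m n : ℕ} {f : Fin m → α} {g : Fin n → α}
    (h : List.ofFn f = List.ofFn g) : ∃ hmn : m = n, ∀ i, f i = g (Fin.cast hmn i) := by
  have hmn : m = n := by simpa using congrArg List.length h
  subst hmn
  exact ⟨rfl, fun i => congrFun (List.ofFn_injective h) i⟩

theorem sum_ite_apply {N p : ℕ} {a : Fin p → Fin N} (ha : Function.Injective a)
    (e : Fin p → ℕ) (i0 : Fin p) :
    (∑ i, if a i = a i0 then e i else 0) = e i0 := by
  rw [Finset.sum_eq_single i0]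
  · simp
  · intro i _ hne
    exact if_neg fun h => hne (ha h)
  · simp

theorem sum_ite_not_mem {N p : ℕ} (a : Fin p → Fin N) (x : Fin N) (hx : x ∉ Set.range a)
    (e : Fin p → ℕ) : (∑ i, if a i = x then e i else 0) = 0 :=
  Finset.sum_eq_zero fun i _ => if_neg fun h => hx ⟨i, h⟩

/-- The full matrix associated to a packed matrix `P` and a row embedding `a`. -/
noncomputable def toM (N : ℕ) (P : PackedMatrix) {q : ℕ} (a : Fin P.p → Fin N)
    (hq : P.q = q) : Fin N → Fin q → ℕ :=
  fun x j => ∑ i, if a i = x then P.entry i (Fin.cast hq.symm j) else 0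

theorem toM_colsum (N : ℕ) (P : PackedMatrix) {q : ℕ} (a : Fin P.p → Fin N)
    (hq : P.q = q) (j : Fin q) :
    ∑ x, toM N P a hq x j = ∑ i, P.entry i (Fin.cast hq.symm j) := by
  simp only [toM]
  rw [Finset.sum_comm]
  refine Finset.sum_congr rfl fun i _ => ?_
  simp

theorem dot_eq_Ff (N : ℕ) (P : PackedMatrix) {q : ℕ} (a : Fin P.p → Fin N)
    (hq : P.q = q) : dotMonomial N P a = Ff N q (toM N P a hq) := by
  subst hq
  unfold dotMonomial Ff
  congr 1
  rw [List.ofFn_inj]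
  funext j
  congr 1
  have hnz : ¬ ∀ x, toM N P a rfl x j = 0 := by
    intro hall
    obtain ⟨i0, hi0⟩ := P.cols_nonzero j
    have h0 : toM N P a rfl (a i0) j = 0 := hall (a i0)
    simp only [toM] at h0
    rw [Finset.sum_eq_zero_iff] at h0
    have := h0 i0 (Finset.mem_univ i0)
    rw [if_pos rfl] at this
    exact hi0 this
  refine Subtype.ext ?_
  rw [monPP_coe _ hnz]
  show (∏ i, MvPolynomial.X (a i) ^ P.entry i j : MvPolynomial (Fin N) ℚ) = _
  have key : ∀ x : Fin N, (MvPolynomial.X x ^ toM N P a rfl x j : MvPolynomial (Fin N) ℚ)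
      = ∏ i, if a i = x then MvPolynomial.X (a i) ^ P.entry i j else 1 := by
    intro x
    simp only [toM]
    rw [← Finset.prod_pow_eq_pow_sum]
    refine Finset.prod_congr rfl fun i _ => ?_
    by_cases h : a i = x
    · rw [if_pos h, if_pos h, h]
      rfl
    · rw [if_neg h, if_neg h, pow_zero]
  rw [Finset.prod_congr rfl fun x _ => key x, Finset.prod_comm]
  refine Finset.prod_congr rfl fun i _ => ?_
  simp

/-- The row support of a full matrix. -/
noncomputable def rowSupp {N q : ℕ} (M : Fin N → Fin q → ℕ) : Finset (Fin N) :=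
  Finset.univ.filter fun x => ∃ j, M x j ≠ 0

theorem mem_rowSupp {N q : ℕ} {M : Fin N → Fin q → ℕ} {x : Fin N} :
    x ∈ rowSupp M ↔ ∃ j, M x j ≠ 0 := by
  rw [rowSupp, Finset.mem_filter]
  simp only [Finset.mem_univ, true_and]

/-- The packed matrix obtained from a full matrix by deleting zero rows. -/
noncomputable def fromP (N q : ℕ) (M : Fin N → Fin q → ℕ) (hcol : ∀ j, ∃ x, M x j ≠ 0) :
    PackedMatrix where
  p := (rowSupp M).card
  q := q
  entry i j := M ((rowSupp M).orderEmbOfFin rfl i) j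
  rows_nonzero i := by
    have h := Finset.orderEmbOfFin_mem (rowSupp M) rfl i
    exact mem_rowSupp.1 h
  cols_nonzero j := by
    obtain ⟨x, hx⟩ := hcol j
    have hxr : x ∈ Set.range ((rowSupp M).orderEmbOfFin rfl) := by
      rw [Finset.range_orderEmbOfFin]
      exact mem_rowSupp.2 ⟨j, hx⟩
    obtain ⟨i, hi⟩ := hxr
    refine ⟨i, ?_⟩
    show M ((rowSupp M).orderEmbOfFin rfl i) j ≠ 0
    rw [hi]; exact hx

theorem fromP_colsum (N q : ℕ) (M : Fin N → Fin q → ℕ) (hcol : ∀ j, ∃ x, M x j ≠ 0)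
    (j : Fin q) :
    ∑ i, (fromP N q M hcol).entry i j = ∑ x, M x j := by
  show ∑ i, M ((rowSupp M).orderEmbOfFin rfl i) j = ∑ x, M x j
  have h1 : ∑ i, M ((rowSupp M).orderEmbOfFin rfl i) j = ∑ x ∈ rowSupp M, M x j := by
    rw [← Finset.sum_coe_sort (rowSupp M) (fun x => M x j)]
    exact Fintype.sum_equiv ((rowSupp M).orderIsoOfFin rfl).toEquiv _ _ (fun i => rfl)
  rw [h1]
  refine Finset.sum_subset (Finset.subset_univ _) fun x _ hx => ?_
  rw [mem_rowSupp] at hx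
  push_neg at hx
  exact hx j

theorem colComp_fromP (N q : ℕ) (M : Fin N → Fin q → ℕ) (hcol : ∀ j, ∃ x, M x j ≠ 0)
    (c : Fin q → ℕ) (hM : ∀ j, ∑ x, M x j = c j) :
    colComp (fromP N q M hcol) = List.ofFn c := by
  show List.ofFn (fun j : Fin q => ∑ i, (fromP N q M hcol).entry i j) = List.ofFn c
  rw [List.ofFn_inj]
  funext j
  rw [fromP_colsum, hM]

theorem toM_rowSupp (N : ℕ) (P : PackedMatrix) {q : ℕ} (a : Fin P.p → Fin N)
    (ha : Function.Injective a) (hq : P.q = q) :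
    rowSupp (toM N P a hq) = Finset.univ.image a := by
  ext x
  rw [mem_rowSupp, Finset.mem_image]
  constructor
  · rintro ⟨j, hj⟩
    by_contra hx
    refine hj (sum_ite_not_mem a x ?_ _)
    rintro ⟨i, hi⟩
    exact hx ⟨i, Finset.mem_univ i, hi⟩
  · rintro ⟨i0, -, rfl⟩
    obtain ⟨j0, hj0⟩ := P.rows_nonzero i0
    refine ⟨Fin.cast hq j0, ?_⟩
    show (∑ i, if a i = a i0 then P.entry i (Fin.cast hq.symm (Fin.cast hq j0)) else 0) ≠ 0
    rw [sum_ite_apply ha]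
    exact hj0

end AuxMS2

section AuxMS3

open Finset

theorem finite_colComp (I : List ℕ) : {P : PackedMatrix | colComp P = I}.Finite := by
  classical
  let L := I.length
  let B := I.sum
  let G : (Σ p : Fin (B + 1), Fin (p : ℕ) → Fin L → Fin (B + 1)) → PackedMatrix := fun z =>
    if h : (∀ i, ∃ j, (z.2 i j : ℕ) ≠ 0) ∧ (∀ j, ∃ i, (z.2 i j : ℕ) ≠ 0) then
      ⟨(z.1 : ℕ), L, fun i j => (z.2 i j : ℕ), h.1, h.2⟩
    else ⟨0, 0, fun i _ => i.elim0, fun i => i.elim0, fun j => j.elim0⟩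
  refine Set.Finite.subset (Set.finite_range G) ?_
  rintro P hP
  simp only [Set.mem_setOf_eq] at hP
  have hq : P.q = L := by
    rw [← colComp_length P, hP]
  have htot : ∑ j : Fin P.q, ∑ i, P.entry i j = B := by
    show _ = I.sum
    rw [← hP, colComp, List.sum_ofFn]
  have hcolsum : ∀ j : Fin P.q, ∑ i, P.entry i j ≤ B := by
    intro j
    rw [← htot]
    exact Finset.single_le_sum (f := fun j => ∑ i, P.entry i j)
      (fun _ _ => Nat.zero_le _) (Finset.mem_univ j)
  have hentry : ∀ (i : Fin P.p) (j : Fin P.q), P.entry i j < B + 1 := by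
    intro i j
    refine Nat.lt_succ_of_le (le_trans ?_ (hcolsum j))
    exact Finset.single_le_sum (f := fun i => P.entry i j)
      (fun _ _ => Nat.zero_le _) (Finset.mem_univ i)
  have hp : P.p < B + 1 := by
    refine Nat.lt_succ_of_le ?_
    calc P.p = ∑ _i : Fin P.p, 1 := by simp
    _ ≤ ∑ i : Fin P.p, ∑ j, P.entry i j := by
        refine Finset.sum_le_sum fun i _ => ?_
        obtain ⟨j0, hj0⟩ := P.rows_nonzero i
        calc 1 ≤ P.entry i j0 := Nat.one_le_iff_ne_zero.2 hj0
        _ ≤ ∑ j, P.entry i j := Finset.single_le_sum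
            (f := fun j => P.entry i j) (fun _ _ => Nat.zero_le _) (Finset.mem_univ j0)
    _ = ∑ j : Fin P.q, ∑ i, P.entry i j := Finset.sum_comm
    _ = B := htot
  refine ⟨⟨⟨P.p, hp⟩, fun i j => ⟨P.entry i (Fin.cast hq.symm j), hentry _ _⟩⟩, ?_⟩
  show dite _ _ _ = P
  rw [dif_pos ?_]
  · refine PackedMatrix.ext'_s17 (hp := rfl) (hq := hq.symm) ?_
    intro i j
    rfl
  · constructor
    · intro i
      obtain ⟨j0, hj0⟩ := P.rows_nonzero i
      exact ⟨Fin.cast hq j0, hj0⟩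
    · intro j
      obtain ⟨i0, hi0⟩ := P.cols_nonzero (Fin.cast hq.symm j)
      exact ⟨i0, hi0⟩

theorem sum_MS_eq (N q : ℕ) (c : Fin q → ℕ) (hc : ∀ j, c j ≠ 0)
    (I : List ℕ) (hIc : I = List.ofFn c) :
    ∑ᶠ P ∈ {P : PackedMatrix | colComp P = I}, MS N P = ∑ M ∈ Mset N q c, Ff N q M := by
  subst hIc
  have hfin : {P : PackedMatrix | colComp P = List.ofFn c}.Finite := finite_colComp _
  rw [finsum_mem_eq_finite_toFinset_sum _ hfin]
  have hMS : ∀ P : PackedMatrix, MS N P =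
      ∑ a ∈ Finset.univ.filter (fun a : Fin P.p → Fin N => StrictMono a),
        dotMonomial N P a := fun _ => rfl
  rw [Finset.sum_congr rfl fun P _ => hMS P, Finset.sum_sigma']
  -- membership data
  have hmem : ∀ z : Σ P : PackedMatrix, Fin P.p → Fin N,
      z ∈ hfin.toFinset.sigma
        (fun P => Finset.univ.filter (fun a : Fin P.p → Fin N => StrictMono a)) →
      colComp z.1 = List.ofFn c ∧ StrictMono z.2 := by
    intro z hz
    rw [Finset.mem_sigma, Set.Finite.mem_toFinset, Finset.mem_filter] at hz
    exact ⟨hz.1, hz.2.2⟩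
  have hqz : ∀ (P : PackedMatrix), colComp P = List.ofFn c → P.q = q := by
    intro P h
    rw [← colComp_length P, h, List.length_ofFn]
  have hcolz : ∀ (P : PackedMatrix) (h : colComp P = List.ofFn c) (j : Fin P.q),
      ∑ i, P.entry i j = c (Fin.cast (hqz P h) j) := by
    intro P h j
    obtain ⟨hlen, hget⟩ := ofFn_eq_ofFn (h.symm ▸ rfl : List.ofFn (fun j : Fin P.q => ∑ i, P.entry i j) = List.ofFn c)
    exact hget j
  have hcolM : ∀ M : Fin N → Fin q → ℕ, M ∈ Mset N q c → ∀ j, ∃ x, M x j ≠ 0 := by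
    intro M hM j
    by_contra hcon
    push_neg at hcon
    have := (mem_Mset.1 hM) j
    rw [Finset.sum_eq_zero (fun x _ => hcon x)] at this
    exact hc j this.symm
  refine Finset.sum_bij'
    (fun z hz => toM N z.1 z.2 (hqz z.1 (hmem z hz).1))
    (fun (M : Fin N → Fin q → ℕ) (hM : M ∈ Mset N q c) =>
      (⟨fromP N q M (hcolM M hM), fun i => (rowSupp M).orderEmbOfFin rfl i⟩ :
      Σ P : PackedMatrix, Fin P.p → Fin N))
    ?_ ?_ ?_ ?_ ?_
  · -- forward membership
    intro z hz
    rw [mem_Mset]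
    intro j
    rw [toM_colsum, hcolz z.1 (hmem z hz).1]
    rfl
  · -- backward membership
    intro M hM
    rw [Finset.mem_sigma, Set.Finite.mem_toFinset, Finset.mem_filter]
    refine ⟨?_, Finset.mem_univ _, ((rowSupp M).orderEmbOfFin rfl).strictMono⟩
    exact colComp_fromP N q M (hcolM M hM) c (mem_Mset.1 hM)
  · -- left inverse
    rintro ⟨P, a⟩ hz
    obtain ⟨hP, ha⟩ := hmem _ hz
    have hq' := hqz P hP
    have hsupp := toM_rowSupp N P a ha.injective hq'
    have hcard : (rowSupp (toM N P a hq')).card = P.p := by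
      rw [hsupp, Finset.card_image_of_injective _ ha.injective, Finset.card_univ,
        Fintype.card_fin]
    have hemb : ∀ i, (rowSupp (toM N P a hq')).orderEmbOfFin rfl i
        = a (Fin.cast hcard i) := by
      have hu : (fun i => a (Fin.cast hcard i))
          = (rowSupp (toM N P a hq')).orderEmbOfFin rfl := by
        refine Finset.orderEmbOfFin_unique rfl (fun i => ?_)
          (ha.comp (fun _ _ h => by exact h))
        · have h2 : a (Fin.cast hcard i) ∈ Finset.univ.image a :=
            Finset.mem_image_of_mem a (Finset.mem_univ _)
          rw [← hsupp] at h2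
          exact h2
      intro i
      rw [← hu]
    have hcolT : ∀ j : Fin q, ∃ x, toM N P a hq' x j ≠ 0 := by
      intro j
      obtain ⟨i0, hi0⟩ := P.cols_nonzero (Fin.cast hq'.symm j)
      refine ⟨a i0, ?_⟩
      show (∑ i, if a i = a i0 then P.entry i (Fin.cast hq'.symm j) else 0) ≠ 0
      rw [sum_ite_apply ha.injective]
      exact hi0
    have hPP : fromP N q (toM N P a hq') hcolT = P := by
      refine PackedMatrix.ext'_s17 (hp := hcard) (hq := hq'.symm) ?_
      intro i j
      show toM N P a hq' ((rowSupp (toM N P a hq')).orderEmbOfFin rfl i) j = _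
      rw [hemb i]
      show (∑ i', if a i' = a (Fin.cast hcard i) then
        P.entry i' (Fin.cast hq'.symm j) else 0) = _
      rw [sum_ite_apply ha.injective]
      rfl
    refine Sigma.ext hPP ?_
    refine (Fin.heq_fun_iff (congrArg PackedMatrix.p hPP)).2 ?_
    intro i
    exact (hemb i).trans rfl
  · -- right inverse
    intro M hM
    funext x j
    show (∑ i, if (rowSupp M).orderEmbOfFin rfl i = x
      then M ((rowSupp M).orderEmbOfFin rfl i) j else 0) = M x j
    by_cases hx : x ∈ rowSupp M
    · have hxr : x ∈ Set.range ((rowSupp M).orderEmbOfFin rfl) := by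
        rw [Finset.range_orderEmbOfFin]; exact hx
      obtain ⟨i0, rfl⟩ := hxr
      exact sum_ite_apply ((rowSupp M).orderEmbOfFin rfl).injective
        (fun i => M ((rowSupp M).orderEmbOfFin rfl i) j) i0
    · rw [sum_ite_not_mem _ x (by rw [Finset.range_orderEmbOfFin]; exact hx)]
      rw [mem_rowSupp] at hx
      push_neg at hx
      exact (hx j).symm
  · -- values agree
    rintro ⟨P, a⟩ hz
    exact dot_eq_Ff N P a (hqz P (hmem _ hz).1)

end AuxMS3

/-- For compositions `I, J`,
`(Σ_{Col(P)=I} MS_P)·(Σ_{Col(Q)=J} MS_Q) = Σ_{Col(R)=I·J} MS_R` in `ℚ{X}`: the map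
`S^I ↦ Σ_{Col(P)=I} MS_P` embeds noncommutative symmetric functions into `MQSym`. -/
theorem MS_col_mul (N : ℕ) (hN : 1 ≤ N) (I J : List ℕ)
    (hI : ∀ x ∈ I, 0 < x) (hJ : ∀ x ∈ J, 0 < x) :
    (∑ᶠ P ∈ {P : PackedMatrix | colComp P = I}, MS N P) *
      (∑ᶠ Q ∈ {Q : PackedMatrix | colComp Q = J}, MS N Q) =
    ∑ᶠ R ∈ {R : PackedMatrix | colComp R = I ++ J}, MS N R := by
  classical
  have hI' : I = List.ofFn (fun j : Fin I.length => I.get j) := (List.ofFn_get I).symm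
  have hJ' : J = List.ofFn (fun j : Fin J.length => J.get j) := (List.ofFn_get J).symm
  have hcI : ∀ j : Fin I.length, I.get j ≠ 0 := fun j => (hI _ (List.get_mem I j)).ne'
  have hcJ : ∀ j : Fin J.length, J.get j ≠ 0 := fun j => (hJ _ (List.get_mem J j)).ne'
  have hIJ : I ++ J = List.ofFn (Fin.append (fun j : Fin I.length => I.get j)
      (fun j : Fin J.length => J.get j)) := by
    rw [List.ofFn_fin_append, ← hI', ← hJ']
  have hcIJ : ∀ j : Fin (I.length + J.length),
      Fin.append (fun j : Fin I.length => I.get j) (fun j : Fin J.length => J.get j) j ≠ 0 := by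
    intro j
    refine Fin.addCases (fun j => ?_) (fun j => ?_) j
    · rw [Fin.append_left]; exact hcI j
    · rw [Fin.append_right]; exact hcJ j
  rw [sum_MS_eq N I.length _ hcI I hI', sum_MS_eq N J.length _ hcJ J hJ',
    sum_MS_eq N (I.length + J.length) _ hcIJ (I ++ J) hIJ]
  exact sum_Ff_mul N I.length J.length _ _


end
end
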